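/- arXiv:1512.06341 — 2 statements merged into one kernel-verified Lean document; each statement's English description precedes it below -/
import Mathlib

section
/- Let Γ̄ be an orbifold group, ρ̄: Γ̄ → Homeo(S¹) a (μ,τ,σ)-representation, and I₀ a periodic gap whose stabilizer is the cyclic subgroup generated by a boundary generator c_i. Let f₀ and g₀ be homeomorphisms of the closure of I₀ coinciding with ρ̄(c_i) on ∂I₀, and suppose there is an orientation-preserving homeomorphism φ₀: I₀ → I₀ with φ₀∘f₀ = g₀∘φ₀ on I₀. Let ρ̄′₁ be a modification of ρ̄ on I₀ by f₀ and ρ̄′₂ a modification of ρ̄ on I₀ by g₀. Then there is a homeomorphism φ of S¹ that extends φ₀, equals the identity on S¹ ∖ 𝔍, and conjugates ρ̄′₁ to ρ̄′₂, i.e. φ∘ρ̄′₁(γ̄) = ρ̄′₂(γ̄)∘φ for every γ̄ ∈ Γ̄. -/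
open Set Filter Topology

noncomputable section

namespace PAFlow

/-- The circle, realized as `ℝ / ℤ`. -/
abbrev S1 : Type := AddCircle (1 : ℝ)

instance {α : Type*} [TopologicalSpace α] : Group (α ≃ₜ α) where
  mul f g := g.trans f
  one := Homeomorph.refl α
  inv := Homeomorph.symm
  mul_assoc f g h := Homeomorph.ext fun _ => rfl
  one_mul f := Homeomorph.ext fun _ => rfl
  mul_one f := Homeomorph.ext fun _ => rfl
  inv_mul_cancel f := Homeomorph.ext fun x => f.symm_apply_apply x

/-- The canonical representative in `[0,1)` of a point of the circle. -/
noncomputable def pos1 (x : S1) : ℝ := (AddCircle.equivIco 1 0 x : ℝ)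

/-- The open positively-oriented arc from `a` to `c`; when `a = c` it is the complement
of `{a}` (full circle minus the point). -/
def oArc (a c : S1) : Set S1 :=
  if a = c then {a}ᶜ else {b : S1 | 0 < pos1 (b - a) ∧ pos1 (b - a) < pos1 (c - a)}

/-- The closed positively-oriented arc from `a` to `c`; when `a = c` it is the whole circle. -/
def cArc (a c : S1) : Set S1 :=
  if a = c then Set.univ else {b : S1 | pos1 (b - a) ≤ pos1 (c - a)}

/-- A homeomorphism of the circle preserves orientation if it preserves
(strict) positively-oriented arcs. -/
def OrientPres (f : S1 ≃ₜ S1) : Prop :=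
  ∀ a b c : S1, b ∈ oArc a c → f b ∈ oArc (f a) (f c)

/-- A homeomorphism of the circle reverses orientation if it reverses
(strict) positively-oriented arcs. -/
def OrientRev (f : S1 ≃ₜ S1) : Prop :=
  ∀ a b c : S1, b ∈ oArc a c → f b ∈ oArc (f c) (f a)

/-- A gap of `μ` is a connected component of the complement of `μ`. -/
def IsGap (μ : Set S1) (I : Set S1) : Prop :=
  ∃ x ∈ μᶜ, I = connectedComponentIn μᶜ x

/-- The type of gaps of `μ`. -/
abbrev Gap (μ : Set S1) : Type := {I : Set S1 // IsGap μ I}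

/-- The data of the finite-order homeomorphism `τ : μ → μ`, of order `k`, fixed point free,
preserving the cyclic order, and such that the closed arcs `[τ^[i] x, τ^[i+1] x]` cover the
circle while the corresponding open arcs are pairwise disjoint. -/
structure TauData (μ : Set S1) (k : ℕ) : Type where
  τ : S1 → S1
  k_pos : 0 < k
  mapsTo : Set.MapsTo τ μ μ
  bijOn : Set.BijOn τ μ μ
  contOn : ContinuousOn τ μ
  fixfree : ∀ x ∈ μ, τ x ≠ x
  order_k : ∀ x ∈ μ, τ^[k] x = x
  ordPres : ∀ x ∈ μ, ∀ y ∈ μ, ∀ z ∈ μ, y ∈ oArc x z → τ y ∈ oArc (τ x) (τ z)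
  arcCover : ∀ x ∈ μ, (⋃ i ∈ Finset.range k, cArc (τ^[i] x) (τ^[i + 1] x)) = Set.univ
  arcDisj : ∀ x ∈ μ, ∀ i < k, ∀ j < k, i ≠ j →
    Disjoint (oArc (τ^[i] x) (τ^[i + 1] x)) (oArc (τ^[j] x) (τ^[j + 1] x))

/-- `ρ` is a `(μ,τ,σ)`-representation. -/
structure IsMTSRep {Γ : Type*} [Group Γ] (ρ : Γ →* (S1 ≃ₜ S1)) (μ : Set S1) (k : ℕ)
    (T : TauData μ k) (σg : Γ →* Equiv.Perm (Gap μ)) : Prop where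
  perfect : Perfect μ
  nonempty : μ.Nonempty
  invariant : ∀ γ : Γ, (ρ γ) '' μ = μ
  minimal : ∀ ν : Set S1, ν.Nonempty → IsClosed ν → (∀ γ : Γ, (ρ γ) '' ν ⊆ ν) → μ ⊆ ν
  orient : ∀ γ : Γ, OrientPres (ρ γ) ∨ OrientRev (ρ γ)
  commPres : ∀ γ : Γ, OrientPres (ρ γ) → ∀ x ∈ μ, ρ γ (T.τ x) = T.τ (ρ γ x)
  commRev : ∀ γ : Γ, OrientRev (ρ γ) → ∀ x ∈ μ, ρ γ (T.τ x) = (T.τ)^[k - 1] (ρ γ x)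
  gapAct : ∀ (γ : Γ) (I : Gap μ), ((σg γ I : Gap μ) : Set S1) = (ρ γ) '' (I : Set S1)

/-- The stabilizer in `Γ` of a gap `I`, for the action `σg` on gaps. -/
def gapStab {Γ : Type*} [Group Γ] {μ : Set S1} (σg : Γ →* Equiv.Perm (Gap μ)) (I : Gap μ) :
    Subgroup Γ where
  carrier := {γ : Γ | σg γ I = I}
  one_mem' := by simp
  mul_mem' := by
    intro x y hx hy
    have hx' : σg x I = I := hx
    have hy' : σg y I = I := hy
    show σg (x * y) I = I
    rw [map_mul, Equiv.Perm.mul_apply, hy', hx']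
  inv_mem' := by
    intro x hx
    have hx' : σg x I = I := hx
    show σg x⁻¹ I = I
    have h : σg x⁻¹ (σg x I) = I := by
      rw [← Equiv.Perm.mul_apply, ← map_mul]; simp
    rw [hx'] at h
    exact h

/-- The union `𝔍` of all the iterates of the gap `I₀`. -/
def gapOrbit {Γ : Type*} [Group Γ] {μ : Set S1} (σg : Γ →* Equiv.Perm (Gap μ))
    (I₀ : Gap μ) : Set S1 :=
  ⋃ γ : Γ, ((σg γ I₀ : Gap μ) : Set S1)

/-- `f` restricts to a homeomorphism of the closure of `I` (the closure being compact,
a continuous bijection of it is automatically a homeomorphism). -/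
def IsClosureHomeo (f : S1 → S1) (I : Set S1) : Prop :=
  ContinuousOn f (closure I) ∧ Set.BijOn f (closure I) (closure I)

/-- `ρ'` is a modification of `ρ` on the gap `I₀` by `f₀` (with respect to the
distinguished element `ci` generating the stabilizer of `I₀`). -/
structure IsModification {Γ : Type*} [Group Γ] (ρ ρ' : Γ →* (S1 ≃ₜ S1)) (μ : Set S1) (k : ℕ)
    (T : TauData μ k) (σg : Γ →* Equiv.Perm (Gap μ)) (I₀ : Gap μ) (ci : Γ)
    (f₀ : S1 → S1) : Prop where
  rep' : IsMTSRep ρ' μ k T σg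
  eq_off : ∀ (γ : Γ) (x : S1), x ∉ gapOrbit σg I₀ → ρ' γ x = ρ γ x
  on_gap : ∀ x ∈ (I₀ : Set S1), ρ' ci x = f₀ x

/-- The (finite) `τ`-orbit of a point. -/
def tauOrbit {μ : Set S1} {k : ℕ} (T : TauData μ k) (x : S1) : Set S1 :=
  {y : S1 | ∃ j < k, (T.τ)^[j] x = y}

/-- The limiting behaviour required of a subsequence in the (k)-convergence property:
there are two `τ`-orbits (of points `xm`, `xp` of `μ`) such that on each compact subset of
the open arc `]τ^[i] xm, τ^[i+1] xm[` the sequence converges uniformly to `τ^[i] xp`. -/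
def KConvSeq (F : ℕ → (S1 ≃ₜ S1)) (μ : Set S1) (k : ℕ) (τ : S1 → S1) : Prop :=
  ∃ xm ∈ μ, ∃ xp ∈ μ, ∀ i < k, ∀ K : Set S1,
    K ⊆ oArc (τ^[i] xm) (τ^[i + 1] xm) → IsCompact K →
      TendstoUniformlyOn (fun n x => (F n) x) (fun _ => τ^[i] xp) atTop K

/-- The (discrete) (k)-convergence property. -/
def HasKConv {Γ : Type*} [Group Γ] (ρ : Γ →* (S1 ≃ₜ S1)) (μ : Set S1) (k : ℕ)
    (τ : S1 → S1) : Prop :=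
  ∀ γs : ℕ → Γ, ∃ φ : ℕ → ℕ, StrictMono φ ∧
    ((∀ m n : ℕ, ρ (γs (φ m)) = ρ (γs (φ n))) ∨
      KConvSeq (fun n => ρ (γs (φ n))) μ k τ)

/-- The almost (k)-convergence property. -/
def HasAlmostKConv {Γ : Type*} [Group Γ] (ρ : Γ →* (S1 ≃ₜ S1)) (μ : Set S1) (k : ℕ)
    (τ : S1 → S1) (σg : Γ →* Equiv.Perm (Gap μ)) : Prop :=
  ∀ γs : ℕ → Γ, ∃ φ : ℕ → ℕ, StrictMono φ ∧
    ((∀ m n : ℕ, ρ (γs (φ m)) = ρ (γs (φ n))) ∨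
      (∃ a γ : Γ, (∃ I : Gap μ, σg γ I = I) ∧
        ∃ p : ℕ → ℤ, ∀ n : ℕ, ρ (γs (φ n)) = ρ (γ ^ (p n) * a)) ∨
      KConvSeq (fun n => ρ (γs (φ n))) μ k τ)

/-- `x` is a topologically attracting fixed point of `f`. -/
def TopAttracting (f : S1 → S1) (x : S1) : Prop :=
  f x = x ∧ ∃ U ∈ 𝓝 x, TendstoUniformlyOn (fun n y => f^[n] y) (fun _ => x) atTop U

/-- `x` is a topologically hyperbolic (attracting or repelling) fixed point of the
homeomorphism `f`. -/
def HypFixed (f : S1 ≃ₜ S1) (x : S1) : Prop :=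
  TopAttracting f x ∨ TopAttracting f.symm x

/-- `x` is a topologically attracting fixed point of `f` within the set `s`. -/
def TopAttractingOn (f : S1 → S1) (s : Set S1) (x : S1) : Prop :=
  f x = x ∧ ∃ U ∈ 𝓝[s] x, TendstoUniformlyOn (fun n y => f^[n] y) (fun _ => x) atTop U

/-- `ρ` is `μ`-faithful. -/
def MuFaithful {Γ : Type*} [Group Γ] (ρ : Γ →* (S1 ≃ₜ S1)) (μ : Set S1) : Prop :=
  ∀ γ : Γ, (∀ x ∈ μ, ρ γ x = x) → γ = 1

/-- `ρ` is non-elementary: it has no finite orbit in the circle. -/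
def NonElementary {Γ : Type*} [Group Γ] (ρ : Γ →* (S1 ≃ₜ S1)) : Prop :=
  ∀ x : S1, ¬ (Set.range fun γ : Γ => ρ γ x).Finite

open scoped commutatorElement

/-- A presentation of a group `Γ` as the fundamental group of a compact 2-orbifold with
nonempty boundary:  generators `a i`, `b i` (handles, or crosscaps when non-orientable, in
which case the `b i` are trivial), torsion generators `d j` of orders `α j ≥ 2`, and
boundary generators `c i`, `q ≥ 1`, subject to the defining relations; being a presentation
is expressed by the universal lifting property. -/
structure OrbifoldPresentation (Γ : Type*) [Group Γ] : Type _ where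
  orientable : Bool
  g : ℕ
  p : ℕ
  q : ℕ
  a : Fin g → Γ
  b : Fin g → Γ
  d : Fin p → Γ
  c : Fin q → Γ
  α : Fin p → ℕ
  q_pos : 1 ≤ q
  α_two : ∀ j, 2 ≤ α j
  b_trivial : orientable = false → ∀ i, b i = 1
  rel_d : ∀ j, d j ^ (α j) = 1
  rel_long : (List.ofFn c).prod =
    (if orientable then (List.ofFn fun i => ⁅a i, b i⁆).prod
      else (List.ofFn fun i => (a i) ^ 2).prod) * (List.ofFn d).prod
  generates : Subgroup.closure
    (Set.range a ∪ Set.range b ∪ Set.range d ∪ Set.range c) = ⊤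
  liftUnique : ∀ (H : Type) (_ : Group H) (fa fb : Fin g → H) (fd : Fin p → H)
    (fc : Fin q → H),
    (orientable = false → ∀ i, fb i = 1) →
    (∀ j, fd j ^ (α j) = 1) →
    ((List.ofFn fc).prod =
      (if orientable then (List.ofFn fun i => ⁅fa i, fb i⁆).prod
        else (List.ofFn fun i => (fa i) ^ 2).prod) * (List.ofFn fd).prod) →
    ∃! φ : Γ →* H, (∀ i, φ (a i) = fa i) ∧ (∀ i, φ (b i) = fb i) ∧
      (∀ j, φ (d j) = fd j) ∧ (∀ i, φ (c i) = fc i)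


/-- `F : ℝ → ℝ` is a lift of the circle map `f` through the projection `ℝ → ℝ/ℤ`. -/
def IsLiftOf (F : ℝ → ℝ) (f : S1 → S1) : Prop :=
  ∀ x : ℝ, ((F x : ℝ) : S1) = f ((x : ℝ) : S1)

/-- Formal letters for words in the generators of an orbifold group presentation. -/
inductive OLetter (g p : ℕ) : Type
  | ga : Fin g → Bool → OLetter g p
  | gb : Fin g → Bool → OLetter g p
  | gd : Fin p → Bool → OLetter g p

/-- Evaluation of a letter in the group. -/
def evLetter {Γ : Type*} [Group Γ] (P : OrbifoldPresentation Γ) :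
    OLetter P.g P.p → Γ
  | .ga i bb => if bb then (P.a i)⁻¹ else P.a i
  | .gb i bb => if bb then (P.b i)⁻¹ else P.b i
  | .gd j bb => if bb then (P.d j)⁻¹ else P.d j

/-- Evaluation of a word (a list of letters), multiplying from left to right. -/
def evWord {Γ : Type*} [Group Γ] (P : OrbifoldPresentation Γ)
    (w : List (OLetter P.g P.p)) : Γ :=
  (w.map (evLetter P)).prod

/-- A word is admissible if, in the non-orientable case, it uses no `b`-letters. -/
def Admissible {Γ : Type*} [Group Γ] (P : OrbifoldPresentation Γ)
    (w : List (OLetter P.g P.p)) : Prop :=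
  P.orientable = false → ∀ l ∈ w, ∀ (i : Fin P.g) (bb : Bool), l ≠ OLetter.gb i bb

/-- The distinguished word `w₀` representing `c₁`:
`[a₁,b₁]⋯[a_g,b_g]d₁⋯d_p` in the orientable case, `a₁²⋯a_g²d₁⋯d_p` otherwise. -/
def w0 {Γ : Type*} [Group Γ] (P : OrbifoldPresentation Γ) : List (OLetter P.g P.p) :=
  (if P.orientable then
    (List.ofFn fun i : Fin P.g =>
      ([OLetter.ga i false, OLetter.gb i false, OLetter.ga i true, OLetter.gb i true] :
        List (OLetter P.g P.p))).flatten
   else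
    (List.ofFn fun i : Fin P.g =>
      ([OLetter.ga i false, OLetter.ga i false] : List (OLetter P.g P.p))).flatten)
  ++ (List.ofFn fun j : Fin P.p => OLetter.gd j false)

/-- The length `ℓ` of `w₀`. -/
def w0Len {Γ : Type*} [Group Γ] (P : OrbifoldPresentation Γ) : ℕ :=
  (if P.orientable then 4 * P.g else 2 * P.g) + P.p

/-- Iterated images `I_n` of the gap `I₀` under the successive elements of the list `l`:
`I_{n+1} = σ(l_n) I_n`. -/
def gapSeq {Γ : Type*} [Group Γ] {μ : Set S1} (σg : Γ →* Equiv.Perm (Gap μ))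
    (I₀ : Gap μ) (l : List Γ) : ℕ → Gap μ
  | 0 => I₀
  | n + 1 => σg (l.getD n 1) (gapSeq σg I₀ l n)

end PAFlow


namespace PAFlow

instance : Fact ((0:ℝ) < 1) := ⟨one_pos⟩

lemma pos1_mem (x : S1) : pos1 x ∈ Ico (0:ℝ) 1 := by
  have h := (AddCircle.equivIco 1 0 x).2
  simpa [pos1] using h

lemma pos1_nonneg (x : S1) : 0 ≤ pos1 x := (pos1_mem x).1
lemma pos1_lt_one (x : S1) : pos1 x < 1 := (pos1_mem x).2

lemma pos1_coe (x : S1) : ((pos1 x : ℝ) : S1) = x :=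
  (AddCircle.equivIco 1 0).symm_apply_apply x

lemma pos1_coe_fract (t : ℝ) : pos1 ((t : ℝ) : S1) = Int.fract t := by
  show ((AddCircle.equivIco 1 0 ((t:ℝ):S1)) : ℝ) = _
  rw [show ((t:ℝ):S1) = QuotientAddGroup.mk t from rfl, AddCircle.coe_equivIco_mk_apply]
  simp

lemma pos1_inj {x y : S1} (h : pos1 x = pos1 y) : x = y := by
  rw [← pos1_coe x, ← pos1_coe y, h]

lemma pos1_zero : pos1 (0 : S1) = 0 := by
  have h : ((0:ℝ):S1) = 0 := by norm_cast
  rw [← h, pos1_coe_fract]; simp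

lemma pos1_eq_zero_iff {x : S1} : pos1 x = 0 ↔ x = 0 :=
  ⟨fun h => by rw [← pos1_coe x, h]; norm_cast, fun h => h ▸ pos1_zero⟩

lemma pos1_pos {x : S1} (h : x ≠ 0) : 0 < pos1 x :=
  (pos1_nonneg x).lt_of_ne (fun e => h (pos1_eq_zero_iff.1 e.symm))

lemma pos1_sub_pos {b a : S1} (h : b ≠ a) : 0 < pos1 (b - a) :=
  pos1_pos (sub_ne_zero.2 h)

lemma pos1_sub_fract (x y : S1) : pos1 (x - y) = Int.fract (pos1 x - pos1 y) := by
  have h : x - y = ((pos1 x - pos1 y : ℝ) : S1) := by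
    rw [show (((pos1 x - pos1 y : ℝ)) : S1) = ((pos1 x : ℝ) : S1) - ((pos1 y : ℝ) : S1) by
      push_cast; ring_nf; rfl, pos1_coe, pos1_coe]
  rw [h, pos1_coe_fract]

lemma pos1_sub_of_lt {x y : S1} (h : pos1 y < pos1 x) : pos1 (x - y) = pos1 x - pos1 y := by
  rw [pos1_sub_fract, Int.fract_eq_self.2 ⟨by linarith, by linarith [pos1_lt_one x, pos1_nonneg y]⟩]

lemma pos1_sub_of_gt {x y : S1} (h : pos1 x < pos1 y) :
    pos1 (x - y) = pos1 x - pos1 y + 1 := by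
  rw [pos1_sub_fract]
  have h1 : Int.fract (pos1 x - pos1 y) = Int.fract (pos1 x - pos1 y + 1) := by
    rw [show pos1 x - pos1 y + 1 = pos1 x - pos1 y + ((1:ℤ):ℝ) by push_cast; ring,
      Int.fract_add_intCast]
  rw [h1, Int.fract_eq_self.2 ⟨by linarith [pos1_nonneg x, pos1_lt_one y], by linarith⟩]

lemma mem_oArc_iff {a c : S1} (h : a ≠ c) {b : S1} :
    b ∈ oArc a c ↔ 0 < pos1 (b - a) ∧ pos1 (b - a) < pos1 (c - a) := by
  rw [oArc, if_neg h]; rfl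

lemma mem_oArc_self {a b : S1} : b ∈ oArc a a ↔ b ≠ a := by
  rw [oArc, if_pos rfl]; exact mem_compl_singleton_iff

lemma ne_of_mem_oArc₁ {a b c : S1} (hac : a ≠ c) (h : b ∈ oArc a c) : b ≠ a := by
  obtain ⟨h1, _⟩ := (mem_oArc_iff hac).1 h
  intro e; rw [e, sub_self, pos1_zero] at h1; exact lt_irrefl _ h1

lemma ne_of_mem_oArc₂ {a b c : S1} (hac : a ≠ c) (h : b ∈ oArc a c) : b ≠ c := by
  obtain ⟨_, h2⟩ := (mem_oArc_iff hac).1 h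
  intro e; rw [e] at h2; exact lt_irrefl _ h2

lemma oArc_not_mem_swap {a c : S1} (hac : a ≠ c) {b : S1} (h : b ∈ oArc a c) :
    b ∉ oArc c a := by
  obtain ⟨h1, h2⟩ := (mem_oArc_iff hac).1 h
  intro h'
  obtain ⟨_, h4⟩ := (mem_oArc_iff (Ne.symm hac)).1 h'
  have e1 : pos1 (b - c) = pos1 (b - a) - pos1 (c - a) + 1 := by
    rw [show b - c = (b - a) - (c - a) by abel, pos1_sub_of_gt h2]
  have hca : 0 < pos1 (c - a) := pos1_sub_pos (Ne.symm hac)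
  have e2 : pos1 (a - c) = 1 - pos1 (c - a) := by
    rw [show a - c = (0:S1) - (c - a) by abel, pos1_sub_of_gt (x := (0:S1)) (y := c - a) (by rw [pos1_zero]; exact hca),
      pos1_zero]; ring
  rw [e1, e2] at h4; linarith

lemma oArc_tricho {a b c : S1} (hab : b ≠ a) (hcb : b ≠ c) (hac : a ≠ c) :
    b ∈ oArc a c ∨ b ∈ oArc c a := by
  have hβ : 0 < pos1 (b - a) := pos1_sub_pos hab
  have hγ : 0 < pos1 (c - a) := pos1_sub_pos (Ne.symm hac)
  have hne : pos1 (b - a) ≠ pos1 (c - a) := fun e => hcb (by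
    have := pos1_inj e; exact sub_left_injective.eq_iff.1 this)
  rcases lt_or_gt_of_ne hne with h | h
  · exact Or.inl ((mem_oArc_iff hac).2 ⟨hβ, h⟩)
  · refine Or.inr ((mem_oArc_iff (Ne.symm hac)).2 ⟨?_, ?_⟩)
    · rw [show b - c = (b - a) - (c - a) by abel, pos1_sub_of_lt h]; linarith
    · rw [show b - c = (b - a) - (c - a) by abel, pos1_sub_of_lt h,
        show a - c = (0:S1) - (c - a) by abel, pos1_sub_of_gt (x := (0:S1)) (y := c - a) (by rw [pos1_zero]; exact hγ),
        pos1_zero]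
      have := pos1_lt_one (b - a); linarith

lemma mem_oArc_of_pos1_lt {x₀ p q r : S1}
    (h1 : pos1 (p - x₀) < pos1 (q - x₀)) (h2 : pos1 (q - x₀) < pos1 (r - x₀)) :
    q ∈ oArc p r := by
  have hpr : p ≠ r := fun e => by rw [e] at h1; linarith
  refine (mem_oArc_iff hpr).2 ⟨?_, ?_⟩
  · rw [show q - p = (q - x₀) - (p - x₀) by abel, pos1_sub_of_lt h1]; linarith
  · rw [show q - p = (q - x₀) - (p - x₀) by abel, show r - p = (r - x₀) - (p - x₀) by abel,
      pos1_sub_of_lt h1, pos1_sub_of_lt (h1.trans h2)]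
    linarith


section OrientLemmas

lemma orientPres_symm {f : S1 ≃ₜ S1} (h : OrientPres f) : OrientPres f.symm := by
  intro a b c hb
  by_cases hac : a = c
  · subst hac
    rw [mem_oArc_self] at hb ⊢
    exact fun e => hb (f.symm.injective e)
  · have hba := ne_of_mem_oArc₁ hac hb
    have hbc := ne_of_mem_oArc₂ hac hb
    have h1 : f.symm a ≠ f.symm c := fun e => hac (f.symm.injective e)
    have h2 : f.symm b ≠ f.symm a := fun e => hba (f.symm.injective e)
    have h3 : f.symm b ≠ f.symm c := fun e => hbc (f.symm.injective e)
    rcases oArc_tricho h2 h3 h1 with h' | h'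
    · exact h'
    · exfalso
      have hh := h _ _ _ h'
      rw [f.apply_symm_apply, f.apply_symm_apply, f.apply_symm_apply] at hh
      exact oArc_not_mem_swap hac hb hh

lemma orientRev_symm {f : S1 ≃ₜ S1} (h : OrientRev f) : OrientRev f.symm := by
  intro a b c hb
  by_cases hac : a = c
  · subst hac
    rw [mem_oArc_self] at hb ⊢
    exact fun e => hb (f.symm.injective e)
  · have hba := ne_of_mem_oArc₁ hac hb
    have hbc := ne_of_mem_oArc₂ hac hb
    have h1 : f.symm a ≠ f.symm c := fun e => hac (f.symm.injective e)
    have h2 : f.symm b ≠ f.symm a := fun e => hba (f.symm.injective e)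
    have h3 : f.symm b ≠ f.symm c := fun e => hbc (f.symm.injective e)
    rcases oArc_tricho h2 h3 h1 with h' | h'
    · exfalso
      have hh := h _ _ _ h'
      rw [f.apply_symm_apply, f.apply_symm_apply, f.apply_symm_apply] at hh
      exact oArc_not_mem_swap hac hb hh
    · exact h'

end OrientLemmas

section Main

variable {Γ : Type} [Group Γ] {μ : Set S1}

lemma gap_subset (I : Gap μ) : (I : Set S1) ⊆ μᶜ := by
  obtain ⟨x, hx, h⟩ := I.2
  rw [h]
  exact connectedComponentIn_subset _ _

lemma gap_eq_of_mem {I J : Gap μ} {x : S1} (hI : x ∈ (I : Set S1)) (hJ : x ∈ (J : Set S1)) :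
    I = J := by
  obtain ⟨a, ha, hea⟩ := I.2
  obtain ⟨b, hb, heb⟩ := J.2
  apply Subtype.ext
  have h1 : connectedComponentIn μᶜ x = (I : Set S1) := by
    rw [hea] at hI ⊢; exact (connectedComponentIn_eq hI).symm
  have h2 : connectedComponentIn μᶜ x = (J : Set S1) := by
    rw [heb] at hJ ⊢; exact (connectedComponentIn_eq hJ).symm
  rw [← h1, ← h2]

lemma gap_preconn (I : Gap μ) : IsPreconnected (I : Set S1) := by
  obtain ⟨x, hx, h⟩ := I.2
  rw [h]
  exact isPreconnected_connectedComponentIn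

variable (σg : Γ →* Equiv.Perm (Gap μ)) (I₀ : Gap μ)

lemma not_mem_gapOrbit_of_mem {x : S1} (hx : x ∈ μ) : x ∉ gapOrbit σg I₀ := by
  intro h
  obtain ⟨γ, hγ⟩ := Set.mem_iUnion.1 h
  exact gap_subset _ hγ hx

lemma hom_mul_apply (ρ : Γ →* (S1 ≃ₜ S1)) (γ δ : Γ) (x : S1) :
    ρ (γ * δ) x = ρ γ (ρ δ x) := by
  rw [map_mul]; rfl

lemma hom_one_apply (ρ : Γ →* (S1 ≃ₜ S1)) (x : S1) : ρ 1 x = x := by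
  rw [map_one]; rfl

lemma hom_inv_cancel (ρ : Γ →* (S1 ≃ₜ S1)) (γ : Γ) (x : S1) : ρ γ (ρ γ⁻¹ x) = x := by
  rw [← hom_mul_apply, mul_inv_cancel, hom_one_apply]

lemma hom_inv_cancel' (ρ : Γ →* (S1 ≃ₜ S1)) (γ : Γ) (x : S1) : ρ γ⁻¹ (ρ γ x) = x := by
  rw [← hom_mul_apply, inv_mul_cancel, hom_one_apply]

variable (ρ'₁ ρ'₂ : Γ →* (S1 ≃ₜ S1)) (φ₀ : S1 → S1) (cc : Γ)

/-- The bundle of hypotheses needed for the gap-by-gap construction. -/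
structure GoodData : Prop where
  act1 : ∀ (γ : Γ) (I : Gap μ), ((σg γ I : Gap μ) : Set S1) = (ρ'₁ γ) '' (I : Set S1)
  act2 : ∀ (γ : Γ) (I : Gap μ), ((σg γ I : Gap μ) : Set S1) = (ρ'₂ γ) '' (I : Set S1)
  stab : gapStab σg I₀ = Subgroup.zpowers cc
  conj : ∀ x ∈ (I₀ : Set S1), φ₀ ((ρ'₁ cc) x) = (ρ'₂ cc) (φ₀ x)
  maps : ∀ x ∈ (I₀ : Set S1), φ₀ x ∈ (I₀ : Set S1)

variable {σg I₀ ρ'₁ ρ'₂ φ₀ cc}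

namespace GoodData

variable (G : GoodData σg I₀ ρ'₁ ρ'₂ φ₀ cc)
include G

lemma zpow_stab (n : ℤ) : σg (cc ^ n) I₀ = I₀ := by
  have h : cc ^ n ∈ gapStab σg I₀ := by
    rw [G.stab]; exact Subgroup.zpow_mem _ (Subgroup.mem_zpowers cc) n
  exact h

lemma mem_I0_of {γ : Γ} {x : S1} (hx : x ∈ ((σg γ I₀ : Gap μ) : Set S1)) :
    ρ'₁ γ⁻¹ x ∈ (I₀ : Set S1) := by
  rw [G.act1] at hx
  obtain ⟨w, hw, hwx⟩ := hx
  rw [← hwx, hom_inv_cancel']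
  exact hw

lemma mem_gap1 {γ : Γ} {x : S1} (hx : x ∈ (I₀ : Set S1)) :
    ρ'₁ γ x ∈ ((σg γ I₀ : Gap μ) : Set S1) := by
  rw [G.act1]
  exact Set.mem_image_of_mem _ hx

lemma mem_gap2 {γ : Γ} {x : S1} (hx : x ∈ (I₀ : Set S1)) :
    ρ'₂ γ x ∈ ((σg γ I₀ : Gap μ) : Set S1) := by
  rw [G.act2]
  exact Set.mem_image_of_mem _ hx

lemma zmem1 (n : ℤ) {x : S1} (hx : x ∈ (I₀ : Set S1)) : ρ'₁ (cc ^ n) x ∈ (I₀ : Set S1) := by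
  have h := G.mem_gap1 (γ := cc ^ n) hx
  rwa [G.zpow_stab n] at h

lemma mem1_cc {x : S1} (hx : x ∈ (I₀ : Set S1)) : ρ'₁ cc x ∈ (I₀ : Set S1) := by
  have h := G.zmem1 1 hx
  rwa [zpow_one] at h

lemma mem1_cc_inv {x : S1} (hx : x ∈ (I₀ : Set S1)) : ρ'₁ cc⁻¹ x ∈ (I₀ : Set S1) := by
  have h := G.zmem1 (-1) hx
  rwa [zpow_neg_one] at h

lemma key : ∀ (n : ℤ), ∀ x ∈ (I₀ : Set S1),
    φ₀ ((ρ'₁ (cc ^ n)) x) = (ρ'₂ (cc ^ n)) (φ₀ x) := by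
  intro n
  induction n using Int.induction_on with
  | zero =>
    intro x hx
    rw [zpow_zero, hom_one_apply, hom_one_apply]
  | succ n ih =>
    intro x hx
    have hy : ρ'₁ cc x ∈ (I₀ : Set S1) := G.mem1_cc hx
    rw [zpow_add_one, hom_mul_apply, ih _ hy, G.conj x hx, ← hom_mul_apply, ← zpow_add_one]
  | pred n ih =>
    intro x hx
    have hy : ρ'₁ cc⁻¹ x ∈ (I₀ : Set S1) := G.mem1_cc_inv hx
    have hxy : ρ'₁ cc (ρ'₁ cc⁻¹ x) = x := hom_inv_cancel _ _ _
    have hconj := G.conj _ hy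
    rw [hxy] at hconj
    have hφy : φ₀ (ρ'₁ cc⁻¹ x) = ρ'₂ cc⁻¹ (φ₀ x) := by
      rw [hconj, hom_inv_cancel']
    rw [zpow_sub_one, hom_mul_apply, ih _ hy, hφy, ← hom_mul_apply, ← zpow_sub_one]

lemma wd {γ δ : Γ} (hset : ((σg γ I₀ : Gap μ) : Set S1) = ((σg δ I₀ : Gap μ) : Set S1))
    {x : S1} (hx : x ∈ ((σg γ I₀ : Gap μ) : Set S1)) :
    ρ'₂ γ (φ₀ (ρ'₁ γ⁻¹ x)) = ρ'₂ δ (φ₀ (ρ'₁ δ⁻¹ x)) := by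
  have hGap : σg γ I₀ = σg δ I₀ := Subtype.ext hset
  have hstab : σg (δ⁻¹ * γ) I₀ = I₀ := by
    rw [map_mul]
    show σg δ⁻¹ (σg γ I₀) = I₀
    rw [hGap, ← Equiv.Perm.mul_apply, ← map_mul, inv_mul_cancel, map_one, Equiv.Perm.one_apply]
  have hmem : δ⁻¹ * γ ∈ gapStab σg I₀ := hstab
  rw [G.stab] at hmem
  obtain ⟨n, hn⟩ := Subgroup.mem_zpowers_iff.1 hmem
  have hγ : γ = δ * cc ^ n := by rw [hn, ← mul_assoc, mul_inv_cancel, one_mul]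
  have hxδ : x ∈ ((σg δ I₀ : Gap μ) : Set S1) := hset ▸ hx
  have hy : ρ'₁ δ⁻¹ x ∈ (I₀ : Set S1) := G.mem_I0_of hxδ
  rw [hγ, mul_inv_rev, hom_mul_apply, hom_mul_apply]
  have hzinv : (cc ^ n)⁻¹ = cc ^ (-n) := by rw [zpow_neg]
  rw [hzinv]
  rw [G.key (-n) _ hy]
  rw [← hom_mul_apply (ρ := ρ'₂) (γ := cc ^ n) (δ := cc ^ (-n))]
  rw [show cc ^ n * cc ^ (-n) = 1 by rw [← zpow_add]; simp, hom_one_apply]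

end GoodData

open Classical in
/-- The global conjugating map: acts by the transported conjugacy on each gap of the
orbit of `I₀`, and by the identity elsewhere. -/
noncomputable def Phi (σg : Γ →* Equiv.Perm (Gap μ)) (I₀ : Gap μ)
    (ρ'₁ ρ'₂ : Γ →* (S1 ≃ₜ S1)) (φ₀ : S1 → S1) : S1 → S1 := fun x =>
  if h : x ∈ gapOrbit σg I₀ then
    ρ'₂ (Set.mem_iUnion.1 h).choose (φ₀ ((ρ'₁ (Set.mem_iUnion.1 h).choose)⁻¹ x))
  else x

lemma Phi_eq_off {x : S1} (hx : x ∉ gapOrbit σg I₀) : Phi σg I₀ ρ'₁ ρ'₂ φ₀ x = x := by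
  rw [Phi, dif_neg hx]

variable {cc : Γ}

lemma Phi_eq_on (G : GoodData σg I₀ ρ'₁ ρ'₂ φ₀ cc) {γ : Γ} {x : S1}
    (hx : x ∈ ((σg γ I₀ : Gap μ) : Set S1)) :
    Phi σg I₀ ρ'₁ ρ'₂ φ₀ x = ρ'₂ γ (φ₀ (ρ'₁ γ⁻¹ x)) := by
  have hmem : x ∈ gapOrbit σg I₀ := Set.mem_iUnion.2 ⟨γ, hx⟩
  rw [Phi, dif_pos hmem]
  have hgx : x ∈ ((σg (Set.mem_iUnion.1 hmem).choose I₀ : Gap μ) : Set S1) :=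
    (Set.mem_iUnion.1 hmem).choose_spec
  have hset : ((σg (Set.mem_iUnion.1 hmem).choose I₀ : Gap μ) : Set S1)
      = ((σg γ I₀ : Gap μ) : Set S1) :=
    congrArg Subtype.val (gap_eq_of_mem hgx hx)
  have h := G.wd hset hgx
  simpa using h

lemma Phi_mem_gap (G : GoodData σg I₀ ρ'₁ ρ'₂ φ₀ cc) {γ : Γ} {x : S1}
    (hx : x ∈ ((σg γ I₀ : Gap μ) : Set S1)) :
    Phi σg I₀ ρ'₁ ρ'₂ φ₀ x ∈ ((σg γ I₀ : Gap μ) : Set S1) := by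
  rw [Phi_eq_on G hx]
  exact G.mem_gap2 (G.maps _ (G.mem_I0_of hx))

lemma Phi_Psi (G : GoodData σg I₀ ρ'₁ ρ'₂ φ₀ cc) {ψ₀ : S1 → S1}
    (G' : GoodData σg I₀ ρ'₂ ρ'₁ ψ₀ cc)
    (hlr : ∀ y ∈ (I₀ : Set S1), ψ₀ (φ₀ y) = y) (x : S1) :
    Phi σg I₀ ρ'₂ ρ'₁ ψ₀ (Phi σg I₀ ρ'₁ ρ'₂ φ₀ x) = x := by
  by_cases hx : x ∈ gapOrbit σg I₀
  · obtain ⟨γ, hγ⟩ := Set.mem_iUnion.1 hx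
    have h1 : Phi σg I₀ ρ'₁ ρ'₂ φ₀ x ∈ ((σg γ I₀ : Gap μ) : Set S1) := Phi_mem_gap G hγ
    rw [Phi_eq_on G' h1, Phi_eq_on G hγ, hom_inv_cancel', hlr _ (G.mem_I0_of hγ),
      hom_inv_cancel]
  · rw [Phi_eq_off hx, Phi_eq_off hx]

lemma Phi_conj (ρ : Γ →* (S1 ≃ₜ S1)) (G : GoodData σg I₀ ρ'₁ ρ'₂ φ₀ cc)
    (hmod1 : ∀ (γ : Γ) (x : S1), x ∉ gapOrbit σg I₀ → ρ'₁ γ x = ρ γ x)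
    (hmod2 : ∀ (γ : Γ) (x : S1), x ∉ gapOrbit σg I₀ → ρ'₂ γ x = ρ γ x)
    (γ : Γ) (x : S1) :
    Phi σg I₀ ρ'₁ ρ'₂ φ₀ (ρ'₁ γ x) = ρ'₂ γ (Phi σg I₀ ρ'₁ ρ'₂ φ₀ x) := by
  by_cases hx : x ∈ gapOrbit σg I₀
  · obtain ⟨δ, hδ⟩ := Set.mem_iUnion.1 hx
    have h1 : ρ'₁ γ x ∈ ((σg (γ * δ) I₀ : Gap μ) : Set S1) := by
      rw [G.act1]
      rw [G.act1] at hδ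
      obtain ⟨w, hw, hwx⟩ := hδ
      exact ⟨w, hw, by rw [hom_mul_apply, hwx]⟩
    rw [Phi_eq_on G h1, Phi_eq_on G hδ]
    have h2 : ρ'₁ (γ * δ)⁻¹ (ρ'₁ γ x) = ρ'₁ δ⁻¹ x := by
      rw [mul_inv_rev, hom_mul_apply, hom_inv_cancel']
    rw [h2, hom_mul_apply]
  · have hx' : ρ'₁ γ x ∉ gapOrbit σg I₀ := by
      intro h
      obtain ⟨δ, hδ⟩ := Set.mem_iUnion.1 h
      apply hx
      refine Set.mem_iUnion.2 ⟨γ⁻¹ * δ, ?_⟩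
      rw [G.act1]
      rw [G.act1] at hδ
      obtain ⟨w, hw, hwx⟩ := hδ
      exact ⟨w, hw, by rw [hom_mul_apply, hwx, hom_inv_cancel']⟩
    rw [Phi_eq_off hx', Phi_eq_off hx, hmod1 γ x hx, hmod2 γ x hx]

end Main


section Orient

variable {Γ : Type} [Group Γ] {μ : Set S1}
variable {σg : Γ →* Equiv.Perm (Gap μ)} {I₀ : Gap μ}
variable {ρ'₁ ρ'₂ : Γ →* (S1 ≃ₜ S1)} {φ₀ : S1 → S1} {cc : Γ}

lemma exists_mu_triple (hμp : Perfect μ) (hμne : μ.Nonempty) :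
    ∃ a b c : S1, a ∈ μ ∧ b ∈ μ ∧ c ∈ μ ∧ a ≠ c ∧ b ∈ oArc a c := by
  obtain ⟨x, hx⟩ := hμne
  have hacc := preperfect_iff_nhds.1 hμp.acc
  obtain ⟨y, ⟨_, hyμ⟩, hyx⟩ := hacc x hx univ univ_mem
  obtain ⟨z, ⟨hz1, hzμ⟩, hzx⟩ := hacc x hx {y}ᶜ
    ((isOpen_compl_singleton).mem_nhds (by simpa using Ne.symm hyx))
  have hzy : z ≠ y := by simpa using hz1
  rcases oArc_tricho (a := x) (b := y) (c := z) hyx (Ne.symm hzy) (Ne.symm hzx) with h | h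
  · exact ⟨x, y, z, hx, hyμ, hzμ, Ne.symm hzx, h⟩
  · exact ⟨z, y, x, hzμ, hyμ, hx, hzx, h⟩

lemma orient_match {γ : Γ}
    (h1or : OrientPres (ρ'₁ γ) ∨ OrientRev (ρ'₁ γ))
    (h2or : OrientPres (ρ'₂ γ) ∨ OrientRev (ρ'₂ γ))
    (hagree : ∀ x ∈ μ, ρ'₁ γ x = ρ'₂ γ x)
    (htriple : ∃ a b c : S1, a ∈ μ ∧ b ∈ μ ∧ c ∈ μ ∧ a ≠ c ∧ b ∈ oArc a c) :
    (OrientPres (ρ'₁ γ) ∧ OrientPres (ρ'₂ γ)) ∨ (OrientRev (ρ'₁ γ) ∧ OrientRev (ρ'₂ γ)) := by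
  obtain ⟨a, b, c, ha, hb, hc, hac, hbac⟩ := htriple
  have hac' : ρ'₁ γ a ≠ ρ'₁ γ c := fun e => hac ((ρ'₁ γ).injective e)
  rcases h1or with hp1 | hr1 <;> rcases h2or with hp2 | hr2
  · exact Or.inl ⟨hp1, hp2⟩
  · exfalso
    have hb1 := hp1 a b c hbac
    have hb2 := hr2 a b c hbac
    rw [← hagree a ha, ← hagree b hb, ← hagree c hc] at hb2
    exact oArc_not_mem_swap hac' hb1 hb2
  · exfalso
    have hb1 := hr1 a b c hbac
    have hb2 := hp2 a b c hbac
    rw [← hagree a ha, ← hagree b hb, ← hagree c hc] at hb2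
    exact oArc_not_mem_swap (Ne.symm hac') hb1 hb2
  · exact Or.inr ⟨hr1, hr2⟩

lemma rho_inv_eq_symm (ρ : Γ →* (S1 ≃ₜ S1)) (γ : Γ) : ρ γ⁻¹ = (ρ γ).symm := by
  rw [map_inv]; rfl

lemma Phi_orient (G : GoodData σg I₀ ρ'₁ ρ'₂ φ₀ cc)
    (hφor : ∀ x ∈ (I₀ : Set S1), ∀ y ∈ (I₀ : Set S1), ∀ z ∈ (I₀ : Set S1),
      y ∈ oArc x z → φ₀ y ∈ oArc (φ₀ x) (φ₀ z))
    {γ : Γ}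
    (hmatch : (OrientPres (ρ'₁ γ) ∧ OrientPres (ρ'₂ γ)) ∨
      (OrientRev (ρ'₁ γ) ∧ OrientRev (ρ'₂ γ)))
    {p q r : S1} (hp : p ∈ ((σg γ I₀ : Gap μ) : Set S1))
    (hq : q ∈ ((σg γ I₀ : Gap μ) : Set S1)) (hr : r ∈ ((σg γ I₀ : Gap μ) : Set S1))
    (h : q ∈ oArc p r) :
    Phi σg I₀ ρ'₁ ρ'₂ φ₀ q ∈
      oArc (Phi σg I₀ ρ'₁ ρ'₂ φ₀ p) (Phi σg I₀ ρ'₁ ρ'₂ φ₀ r) := by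
  rw [Phi_eq_on G hp, Phi_eq_on G hq, Phi_eq_on G hr]
  have hp' := G.mem_I0_of hp
  have hq' := G.mem_I0_of hq
  have hr' := G.mem_I0_of hr
  rcases hmatch with ⟨hp1, hp2⟩ | ⟨hr1, hr2⟩
  · have hsym : OrientPres (ρ'₁ γ⁻¹) := by
      rw [rho_inv_eq_symm]; exact orientPres_symm hp1
    have h1 : ρ'₁ γ⁻¹ q ∈ oArc (ρ'₁ γ⁻¹ p) (ρ'₁ γ⁻¹ r) := hsym p q r h
    have h2 := hφor _ hp' _ hq' _ hr' h1
    exact hp2 _ _ _ h2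
  · have hsym : OrientRev (ρ'₁ γ⁻¹) := by
      rw [rho_inv_eq_symm]; exact orientRev_symm hr1
    have h1 : ρ'₁ γ⁻¹ q ∈ oArc (ρ'₁ γ⁻¹ r) (ρ'₁ γ⁻¹ p) := hsym p q r h
    have h2 := hφor _ hr' _ hq' _ hp' h1
    exact hr2 _ _ _ h2

end Orient


section Mono

variable {Γ : Type} [Group Γ] {μ : Set S1}
variable {σg : Γ →* Equiv.Perm (Gap μ)} {I₀ : Gap μ}
variable {ρ'₁ ρ'₂ : Γ →* (S1 ≃ₜ S1)} {φ₀ : S1 → S1} {cc : Γ}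

lemma coe_pos1_sub_add (x₀ y : S1) : ((pos1 (y - x₀) : ℝ) : S1) + x₀ = y := by
  rw [pos1_coe, sub_add_cancel]

lemma pos1_sub_inj {x₀ y z : S1} (h : pos1 (y - x₀) = pos1 (z - x₀)) : y = z := by
  have h2 := pos1_inj h
  exact sub_left_injective.eq_iff.1 h2

lemma pos1_coe_add (x₀ : S1) {t : ℝ} (ht : t ∈ Ico (0:ℝ) 1) :
    pos1 ((t : S1) + x₀ - x₀) = t := by
  rw [add_sub_cancel_right, pos1_coe_fract, Int.fract_eq_self.2 ht]

lemma contOn_pos1_sub (x₀ : S1) : ContinuousOn (fun y => pos1 (y - x₀)) {x₀}ᶜ := by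
  intro y hy
  apply ContinuousAt.continuousWithinAt
  have hy' : y ≠ x₀ := by simpa using hy
  have h1 : ContinuousAt (fun y : S1 => y - x₀) y :=
    (continuous_id.sub continuous_const).continuousAt
  have hz : y - x₀ ≠ (((0:ℝ)) : S1) := by
    rw [show (((0:ℝ)):S1) = 0 by norm_cast]
    exact sub_ne_zero.2 hy'
  have h2 : ContinuousAt (AddCircle.equivIco 1 0) (y - x₀) :=
    AddCircle.continuousAt_equivIco 1 0 hz
  have h3 : ContinuousAt ((fun p : Ico (0:ℝ) (0+1) => (p : ℝ)) ∘ (AddCircle.equivIco 1 0) ∘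
      (fun y : S1 => y - x₀)) y :=
    ContinuousAt.comp continuousAt_subtype_val (ContinuousAt.comp h2 h1)
  exact h3

lemma image_u_ordConn {x₀ : S1} {s : Set S1} (hs : IsPreconnected s) (hx₀ : x₀ ∉ s) :
    OrdConnected ((fun w => pos1 (w - x₀)) '' s) := by
  have hsub : s ⊆ {x₀}ᶜ := fun w hw => by
    simp only [mem_compl_iff, mem_singleton_iff]
    exact fun e => hx₀ (e ▸ hw)
  exact (hs.image _ ((contOn_pos1_sub x₀).mono hsub)).ordConnected

lemma mem_of_u_mem {x₀ : S1} {s : Set S1} {t : ℝ}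
    (ht : t ∈ (fun w => pos1 (w - x₀)) '' s) : ((t : ℝ) : S1) + x₀ ∈ s := by
  obtain ⟨w, hw, hwt⟩ := ht
  rw [← hwt, coe_pos1_sub_add]
  exact hw

lemma Phi_contOn_gap (G : GoodData σg I₀ ρ'₁ ρ'₂ φ₀ cc)
    (hφc : ContinuousOn φ₀ (I₀ : Set S1)) (γ : Γ) :
    ContinuousOn (Phi σg I₀ ρ'₁ ρ'₂ φ₀) ((σg γ I₀ : Gap μ) : Set S1) := by
  have hcont : ContinuousOn (fun x => ρ'₂ γ (φ₀ (ρ'₁ γ⁻¹ x))) ((σg γ I₀ : Gap μ) : Set S1) := by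
    apply (ρ'₂ γ).continuous.comp_continuousOn
    apply hφc.comp ((ρ'₁ γ⁻¹).continuous.continuousOn)
    intro x hx
    exact G.mem_I0_of hx
  exact hcont.congr (fun x hx => Phi_eq_on G hx)

lemma Phi_mono_gap (G : GoodData σg I₀ ρ'₁ ρ'₂ φ₀ cc)
    (hinj : Function.Injective (Phi σg I₀ ρ'₁ ρ'₂ φ₀))
    (hφc : ContinuousOn φ₀ (I₀ : Set S1))
    (hφor : ∀ x ∈ (I₀ : Set S1), ∀ y ∈ (I₀ : Set S1), ∀ z ∈ (I₀ : Set S1),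
      y ∈ oArc x z → φ₀ y ∈ oArc (φ₀ x) (φ₀ z))
    {γ : Γ}
    (hmatch : (OrientPres (ρ'₁ γ) ∧ OrientPres (ρ'₂ γ)) ∨
      (OrientRev (ρ'₁ γ) ∧ OrientRev (ρ'₂ γ)))
    {x₀ : S1} (hx₀ : x₀ ∉ gapOrbit σg I₀)
    {y z : S1} (hy : y ∈ ((σg γ I₀ : Gap μ) : Set S1))
    (hz : z ∈ ((σg γ I₀ : Gap μ) : Set S1))
    (hlt : pos1 (y - x₀) < pos1 (z - x₀)) :
    pos1 (Phi σg I₀ ρ'₁ ρ'₂ φ₀ y - x₀) < pos1 (Phi σg I₀ ρ'₁ ρ'₂ φ₀ z - x₀) := by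
  set Φ := Phi σg I₀ ρ'₁ ρ'₂ φ₀ with hΦ
  set u : S1 → ℝ := fun w => pos1 (w - x₀) with hu
  set J : Set S1 := ((σg γ I₀ : Gap μ) : Set S1) with hJ
  have hx₀J : x₀ ∉ J := fun h => hx₀ (Set.mem_iUnion.2 ⟨γ, h⟩)
  have hordc : OrdConnected (u '' J) := image_u_ordConn (gap_preconn _) hx₀J
  have hIcc : Icc (u y) (u z) ⊆ u '' J :=
    hordc.out (mem_image_of_mem u hy) (mem_image_of_mem u hz)
  have hmemJ : ∀ t ∈ Icc (u y) (u z), ((t : ℝ) : S1) + x₀ ∈ J :=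
    fun t ht => mem_of_u_mem (hIcc ht)
  have htIco : ∀ t ∈ Icc (u y) (u z), t ∈ Ico (0:ℝ) 1 := fun t ht =>
    ⟨le_trans (pos1_nonneg _) ht.1, lt_of_le_of_lt ht.2 (pos1_lt_one _)⟩
  set F : ℝ → ℝ := fun t => u (Φ (((t : ℝ) : S1) + x₀)) with hF
  have hFval : ∀ w : S1, w ∈ J → F (u w) = u (Φ w) := by
    intro w hw
    simp only [hF, hu]
    rw [coe_pos1_sub_add]
  have hsubJ : J ⊆ {x₀}ᶜ := fun w hw => by
    simp only [mem_compl_iff, mem_singleton_iff]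
    exact fun e => hx₀J (e ▸ hw)
  have hPhimaps : ∀ w ∈ J, Φ w ∈ J := fun w hw => Phi_mem_gap G hw
  have hFcont : ContinuousOn F (Icc (u y) (u z)) := by
    have he : ContinuousOn (fun t : ℝ => ((t : ℝ) : S1) + x₀) (Icc (u y) (u z)) :=
      ((AddCircle.continuous_mk' 1).comp continuous_id).add continuous_const |>.continuousOn
    have h1 : ContinuousOn (fun t : ℝ => Φ (((t : ℝ) : S1) + x₀)) (Icc (u y) (u z)) :=
      (Phi_contOn_gap G hφc γ).comp he hmemJ
    exact ((contOn_pos1_sub x₀).mono hsubJ).comp h1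
      (fun t ht => hPhimaps _ (hmemJ t ht))
  have hFinj : InjOn F (Icc (u y) (u z)) := by
    intro t1 h1 t2 h2 he
    have hw1 : ((t1 : ℝ) : S1) + x₀ ∈ J := hmemJ _ h1
    have hw2 : ((t2 : ℝ) : S1) + x₀ ∈ J := hmemJ _ h2
    have hPe : Φ (((t1 : ℝ) : S1) + x₀) = Φ (((t2 : ℝ) : S1) + x₀) := pos1_sub_inj he
    have hee : ((t1 : ℝ) : S1) + x₀ = ((t2 : ℝ) : S1) + x₀ := hinj hPe
    have e1 := pos1_coe_add x₀ (htIco _ h1)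
    have e2 := pos1_coe_add x₀ (htIco _ h2)
    rw [← e1, ← e2, hee]
  rcases ContinuousOn.strictMonoOn_of_injOn_Icc' hlt.le hFcont hFinj with hmono | hanti
  · have h := hmono (left_mem_Icc.2 hlt.le) (right_mem_Icc.2 hlt.le) hlt
    rwa [hFval y hy, hFval z hz] at h
  · exfalso
    set m := (u y + u z) / 2 with hm
    have hm1 : u y < m := by rw [hm]; linarith
    have hm2 : m < u z := by rw [hm]; linarith
    have hmIcc : m ∈ Icc (u y) (u z) := ⟨hm1.le, hm2.le⟩
    have hwm : ((m : ℝ) : S1) + x₀ ∈ J := hmemJ _ hmIcc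
    have hum : u (((m : ℝ) : S1) + x₀) = m := pos1_coe_add x₀ (htIco _ hmIcc)
    have hq : (((m : ℝ) : S1) + x₀) ∈ oArc y z :=
      mem_oArc_of_pos1_lt (by rw [show pos1 ((((m:ℝ):S1) + x₀) - x₀) = m from hum]; exact hm1)
        (by rw [show pos1 ((((m:ℝ):S1) + x₀) - x₀) = m from hum]; exact hm2)
    have hPq := Phi_orient G hφor hmatch hy hwm hz hq
    have ha1 := hanti (left_mem_Icc.2 hlt.le) hmIcc hm1
    have ha2 := hanti hmIcc (right_mem_Icc.2 hlt.le) hm2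
    rw [hFval y hy] at ha1
    rw [hFval z hz] at ha2
    have hFm : F m = u (Φ (((m : ℝ) : S1) + x₀)) := rfl
    rw [hFm] at ha1 ha2
    have h2 : Φ (((m : ℝ) : S1) + x₀) ∈ oArc (Φ z) (Φ y) :=
      mem_oArc_of_pos1_lt ha2 ha1
    have hyz : Φ y ≠ Φ z := by
      intro e
      have := hinj e
      rw [this] at hlt
      exact lt_irrefl _ hlt
    exact oArc_not_mem_swap hyz hPq h2

lemma Phi_mono (G : GoodData σg I₀ ρ'₁ ρ'₂ φ₀ cc)
    (hinj : Function.Injective (Phi σg I₀ ρ'₁ ρ'₂ φ₀))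
    (hφc : ContinuousOn φ₀ (I₀ : Set S1))
    (hφor : ∀ x ∈ (I₀ : Set S1), ∀ y ∈ (I₀ : Set S1), ∀ z ∈ (I₀ : Set S1),
      y ∈ oArc x z → φ₀ y ∈ oArc (φ₀ x) (φ₀ z))
    (hmatch : ∀ γ : Γ, (OrientPres (ρ'₁ γ) ∧ OrientPres (ρ'₂ γ)) ∨
      (OrientRev (ρ'₁ γ) ∧ OrientRev (ρ'₂ γ)))
    {x₀ : S1} (hx₀ : x₀ ∉ gapOrbit σg I₀)
    {y z : S1} (hy : y ≠ x₀) (hz : z ≠ x₀)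
    (hlt : pos1 (y - x₀) < pos1 (z - x₀)) :
    pos1 (Phi σg I₀ ρ'₁ ρ'₂ φ₀ y - x₀) < pos1 (Phi σg I₀ ρ'₁ ρ'₂ φ₀ z - x₀) := by
  set Φ := Phi σg I₀ ρ'₁ ρ'₂ φ₀ with hΦ
  set u : S1 → ℝ := fun w => pos1 (w - x₀) with hu
  by_cases hyo : y ∈ gapOrbit σg I₀ <;> by_cases hzo : z ∈ gapOrbit σg I₀
  · -- both in orbit
    obtain ⟨γ, hγ⟩ := Set.mem_iUnion.1 hyo
    obtain ⟨δ, hδ⟩ := Set.mem_iUnion.1 hzo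
    by_cases hJ : ((σg γ I₀ : Gap μ) : Set S1) = ((σg δ I₀ : Gap μ) : Set S1)
    · exact Phi_mono_gap G hinj hφc hφor (hmatch γ) hx₀ hγ (by rw [hJ]; exact hδ) hlt
    · have hd : ∀ w : S1, w ∈ ((σg γ I₀ : Gap μ) : Set S1) →
          w ∈ ((σg δ I₀ : Gap μ) : Set S1) → False := fun w h1 h2 =>
        hJ (congrArg Subtype.val (gap_eq_of_mem h1 h2))
      have hPy := Phi_mem_gap G hγ
      have hPz := Phi_mem_gap G hδ
      have hx₀γ : x₀ ∉ ((σg γ I₀ : Gap μ) : Set S1) :=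
        fun h => hx₀ (Set.mem_iUnion.2 ⟨γ, h⟩)
      have hx₀δ : x₀ ∉ ((σg δ I₀ : Gap μ) : Set S1) :=
        fun h => hx₀ (Set.mem_iUnion.2 ⟨δ, h⟩)
      have hordγ : OrdConnected (u '' ((σg γ I₀ : Gap μ) : Set S1)) :=
        image_u_ordConn (gap_preconn _) hx₀γ
      have hordδ : OrdConnected (u '' ((σg δ I₀ : Gap μ) : Set S1)) :=
        image_u_ordConn (gap_preconn _) hx₀δ
      by_contra hcon
      push_neg at hcon
      rcases lt_trichotomy (u (Φ z)) (u y) with h1 | h1 | h1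
      · have hmem : u y ∈ u '' ((σg δ I₀ : Gap μ) : Set S1) :=
          hordδ.out (mem_image_of_mem u hPz) (mem_image_of_mem u hδ) ⟨h1.le, hlt.le⟩
        obtain ⟨w, hw, hwu⟩ := hmem
        exact hd y hγ ((pos1_sub_inj hwu).symm ▸ hw)
      · have : y = Φ z := pos1_sub_inj h1.symm
        exact hd y hγ (this ▸ hPz)
      · have hmem : u (Φ z) ∈ u '' ((σg γ I₀ : Gap μ) : Set S1) :=
          hordγ.out (mem_image_of_mem u hγ) (mem_image_of_mem u hPy)
            ⟨h1.le, hcon⟩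
        obtain ⟨w, hw, hwu⟩ := hmem
        exact hd (Φ z) ((pos1_sub_inj hwu).symm ▸ hw) hPz
  · -- y in orbit, z not
    obtain ⟨γ, hγ⟩ := Set.mem_iUnion.1 hyo
    have hPy := Phi_mem_gap G hγ
    have hx₀γ : x₀ ∉ ((σg γ I₀ : Gap μ) : Set S1) :=
      fun h => hx₀ (Set.mem_iUnion.2 ⟨γ, h⟩)
    have hordγ : OrdConnected (u '' ((σg γ I₀ : Gap μ) : Set S1)) :=
      image_u_ordConn (gap_preconn _) hx₀γ
    rw [show Φ z = z from Phi_eq_off hzo]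
    by_contra hcon
    push_neg at hcon
    have hmem : u z ∈ u '' ((σg γ I₀ : Gap μ) : Set S1) :=
      hordγ.out (mem_image_of_mem u hγ) (mem_image_of_mem u hPy) ⟨hlt.le, hcon⟩
    obtain ⟨w, hw, hwu⟩ := hmem
    exact hzo (Set.mem_iUnion.2 ⟨γ, (pos1_sub_inj hwu).symm ▸ hw⟩)
  · -- z in orbit, y not
    obtain ⟨δ, hδ⟩ := Set.mem_iUnion.1 hzo
    have hPz := Phi_mem_gap G hδ
    have hx₀δ : x₀ ∉ ((σg δ I₀ : Gap μ) : Set S1) :=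
      fun h => hx₀ (Set.mem_iUnion.2 ⟨δ, h⟩)
    have hordδ : OrdConnected (u '' ((σg δ I₀ : Gap μ) : Set S1)) :=
      image_u_ordConn (gap_preconn _) hx₀δ
    rw [show Φ y = y from Phi_eq_off hyo]
    by_contra hcon
    push_neg at hcon
    have hmem : u y ∈ u '' ((σg δ I₀ : Gap μ) : Set S1) :=
      hordδ.out (mem_image_of_mem u hPz) (mem_image_of_mem u hδ) ⟨hcon, hlt.le⟩
    obtain ⟨w, hw, hwu⟩ := hmem
    exact hyo (Set.mem_iUnion.2 ⟨δ, (pos1_sub_inj hwu).symm ▸ hw⟩)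
  · rw [show Φ y = y from Phi_eq_off hyo, show Φ z = z from Phi_eq_off hzo]
    exact hlt

end Mono


section Cont

variable {Γ : Type} [Group Γ] {μ : Set S1}
variable {σg : Γ →* Equiv.Perm (Gap μ)} {I₀ : Gap μ}
variable {ρ'₁ ρ'₂ : Γ →* (S1 ≃ₜ S1)} {φ₀ : S1 → S1} {cc : Γ}

lemma coe_Ioo_ne {t : ℝ} (ht : t ∈ Ioo (0:ℝ) 1) (x₀ : S1) : ((t : ℝ) : S1) + x₀ ≠ x₀ := by
  intro e
  have h0 : ((t : ℝ) : S1) = 0 := by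
    have := congrArg (fun w => w - x₀) e
    simpa using this
  obtain ⟨n, hn⟩ := (AddCircle.coe_eq_zero_iff (p := (1:ℝ))).1 h0
  have hnn : ((n : ℝ)) = t := by
    rw [← hn]; simp
  rcases lt_trichotomy n 0 with h | h | h
  · have : (n : ℝ) < 0 := by exact_mod_cast h
    rw [hnn] at this; linarith [ht.1]
  · rw [h] at hnn; simp at hnn; linarith [ht.1, hnn]
  · have : (1 : ℝ) ≤ (n : ℝ) := by exact_mod_cast h
    rw [hnn] at this; linarith [ht.2]

lemma Phi_contOn (hbij : Function.Bijective (Phi σg I₀ ρ'₁ ρ'₂ φ₀))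
    {x₀ : S1} (hx₀o : x₀ ∉ gapOrbit σg I₀)
    (hmono : ∀ y z : S1, y ≠ x₀ → z ≠ x₀ → pos1 (y - x₀) < pos1 (z - x₀) →
      pos1 (Phi σg I₀ ρ'₁ ρ'₂ φ₀ y - x₀) < pos1 (Phi σg I₀ ρ'₁ ρ'₂ φ₀ z - x₀)) :
    ContinuousOn (Phi σg I₀ ρ'₁ ρ'₂ φ₀) {x₀}ᶜ := by
  set Φ := Phi σg I₀ ρ'₁ ρ'₂ φ₀ with hΦ
  have hfix : Φ x₀ = x₀ := Phi_eq_off hx₀o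
  have hne : ∀ y : S1, y ≠ x₀ → Φ y ≠ x₀ := by
    intro y h e
    exact h (hbij.1 (by rw [e, hfix]))
  set Gm : Ioo (0:ℝ) 1 → Ioo (0:ℝ) 1 := fun t =>
    ⟨pos1 (Φ (((t : ℝ) : S1) + x₀) - x₀),
      pos1_sub_pos (hne _ (coe_Ioo_ne t.2 x₀)), pos1_lt_one _⟩ with hGm
  have hGmono : StrictMono Gm := by
    intro t s hts
    show pos1 (Φ (((t : ℝ) : S1) + x₀) - x₀) < pos1 (Φ (((s : ℝ) : S1) + x₀) - x₀)
    apply hmono _ _ (coe_Ioo_ne t.2 x₀) (coe_Ioo_ne s.2 x₀)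
    rw [pos1_coe_add x₀ ⟨t.2.1.le, t.2.2⟩, pos1_coe_add x₀ ⟨s.2.1.le, s.2.2⟩]
    exact hts
  have hGsurj : Function.Surjective Gm := by
    intro r
    obtain ⟨y', hy'⟩ := hbij.2 (((r : ℝ) : S1) + x₀)
    have hy'ne : y' ≠ x₀ := by
      intro e
      apply coe_Ioo_ne r.2 x₀
      rw [← hy', e, hfix]
    refine ⟨⟨pos1 (y' - x₀), pos1_sub_pos hy'ne, pos1_lt_one _⟩, ?_⟩
    apply Subtype.ext
    show pos1 (Φ (((pos1 (y' - x₀) : ℝ) : S1) + x₀) - x₀) = (r : ℝ)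
    rw [coe_pos1_sub_add, hy', pos1_coe_add x₀ ⟨r.2.1.le, r.2.2⟩]
  have hGcont : Continuous Gm :=
    (StrictMono.orderIsoOfSurjective Gm hGmono hGsurj).continuous
  rw [continuousOn_iff_continuous_restrict]
  have hyne : ∀ y : ({x₀}ᶜ : Set S1), (y : S1) ≠ x₀ := fun y => y.2
  have heq : Set.restrict {x₀}ᶜ Φ = (fun t : Ioo (0:ℝ) 1 => ((t : ℝ) : S1) + x₀) ∘ Gm ∘
      (fun y : ({x₀}ᶜ : Set S1) =>
        (⟨pos1 ((y : S1) - x₀), pos1_sub_pos (hyne y), pos1_lt_one _⟩ : Ioo (0:ℝ) 1)) := by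
    funext y
    simp only [Function.comp_apply, Set.restrict_apply]
    have h1 : ((Gm ⟨pos1 ((y : S1) - x₀), pos1_sub_pos (hyne y), pos1_lt_one _⟩ : ℝ) : S1) + x₀
        = Φ (y : S1) := by
      have h2 : (Gm ⟨pos1 ((y : S1) - x₀), pos1_sub_pos (hyne y), pos1_lt_one _⟩ : ℝ)
          = pos1 (Φ (((pos1 ((y : S1) - x₀) : ℝ) : S1) + x₀) - x₀) := rfl
      rw [h2, coe_pos1_sub_add, coe_pos1_sub_add]
    exact h1.symm
  change Continuous (Set.restrict {x₀}ᶜ Φ)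
  rw [heq]
  have hc1 : Continuous (fun t : Ioo (0:ℝ) 1 => ((t : ℝ) : S1) + x₀) :=
    (((AddCircle.continuous_mk' 1).comp continuous_subtype_val).add continuous_const)
  have hc3 : Continuous (fun y : ({x₀}ᶜ : Set S1) =>
      (⟨pos1 ((y : S1) - x₀), pos1_sub_pos (hyne y), pos1_lt_one _⟩ : Ioo (0:ℝ) 1)) := by
    apply Continuous.subtype_mk
    exact (contOn_pos1_sub x₀).restrict
  exact hc1.comp (hGcont.comp hc3)

end Cont

end PAFlow


open PAFlow in
/-- modifications by topologically conjugate gap maps are topologically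
conjugate, by a conjugacy extending the given one on the gap and equal to the identity off
the orbit `𝔍` of the gap. -/
theorem statement2 {Γ : Type} [Group Γ] (P : OrbifoldPresentation Γ)
    (ρ : Γ →* (S1 ≃ₜ S1)) (μ : Set S1) (k : ℕ)
    (T : TauData μ k) (σg : Γ →* Equiv.Perm (Gap μ))
    (hrep : IsMTSRep ρ μ k T σg)
    (I₀ : Gap μ) (hper : gapStab σg I₀ ≠ ⊥)
    (i : Fin P.q) (hstab : gapStab σg I₀ = Subgroup.zpowers (P.c i))
    (f₀ g₀ : S1 → S1)
    (hf₀ : IsClosureHomeo f₀ (I₀ : Set S1)) (hg₀ : IsClosureHomeo g₀ (I₀ : Set S1))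
    (hbdf : ∀ x ∈ frontier (I₀ : Set S1), f₀ x = ρ (P.c i) x)
    (hbdg : ∀ x ∈ frontier (I₀ : Set S1), g₀ x = ρ (P.c i) x)
    (φ₀ : S1 → S1)
    (hφ₀cont : ContinuousOn φ₀ (I₀ : Set S1))
    (hφ₀bij : Set.BijOn φ₀ (I₀ : Set S1) (I₀ : Set S1))
    (hφ₀orient : ∀ x ∈ (I₀ : Set S1), ∀ y ∈ (I₀ : Set S1), ∀ z ∈ (I₀ : Set S1),
      y ∈ oArc x z → φ₀ y ∈ oArc (φ₀ x) (φ₀ z))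
    (hconj : ∀ x ∈ (I₀ : Set S1), φ₀ (f₀ x) = g₀ (φ₀ x))
    (ρ'₁ ρ'₂ : Γ →* (S1 ≃ₜ S1))
    (h₁ : IsModification ρ ρ'₁ μ k T σg I₀ (P.c i) f₀)
    (h₂ : IsModification ρ ρ'₂ μ k T σg I₀ (P.c i) g₀) :
    ∃ φ : S1 ≃ₜ S1,
      (∀ x ∈ (I₀ : Set S1), φ x = φ₀ x) ∧
      (∀ x : S1, x ∉ gapOrbit σg I₀ → φ x = x) ∧
      (∀ (γ : Γ) (x : S1), φ (ρ'₁ γ x) = ρ'₂ γ (φ x)) := by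
  classical
  set cc := P.c i with hcc
  have hG : GoodData σg I₀ ρ'₁ ρ'₂ φ₀ cc :=
    { act1 := h₁.rep'.gapAct
      act2 := h₂.rep'.gapAct
      stab := hstab
      conj := fun x hx => by
        rw [h₁.on_gap x hx, hconj x hx, h₂.on_gap _ (hφ₀bij.mapsTo hx)]
      maps := fun x hx => hφ₀bij.mapsTo hx }
  set ψ₀ := Function.invFunOn φ₀ (I₀ : Set S1) with hψ₀
  have hinv := Set.BijOn.invOn_invFunOn hφ₀bij
  have hψmaps : ∀ y ∈ (I₀ : Set S1), ψ₀ y ∈ (I₀ : Set S1) :=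
    fun y hy => Set.SurjOn.mapsTo_invFunOn hφ₀bij.surjOn hy
  have hψconj : ∀ y ∈ (I₀ : Set S1), ψ₀ ((ρ'₂ cc) y) = (ρ'₁ cc) (ψ₀ y) := by
    intro y hy
    have h1 : ψ₀ y ∈ (I₀ : Set S1) := hψmaps y hy
    have h2 : ρ'₁ cc (ψ₀ y) ∈ (I₀ : Set S1) := hG.mem1_cc h1
    have h3 : φ₀ (ψ₀ y) = y := hinv.2 hy
    calc ψ₀ (ρ'₂ cc y) = ψ₀ (ρ'₂ cc (φ₀ (ψ₀ y))) := by rw [h3]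
      _ = ψ₀ (φ₀ (ρ'₁ cc (ψ₀ y))) := by rw [hG.conj _ h1]
      _ = ρ'₁ cc (ψ₀ y) := hinv.1 h2
  have hG' : GoodData σg I₀ ρ'₂ ρ'₁ ψ₀ cc :=
    { act1 := h₂.rep'.gapAct
      act2 := h₁.rep'.gapAct
      stab := hstab
      conj := hψconj
      maps := hψmaps }
  set Φf := Phi σg I₀ ρ'₁ ρ'₂ φ₀ with hΦf
  set Ψf := Phi σg I₀ ρ'₂ ρ'₁ ψ₀ with hΨf
  have hleft : ∀ x, Ψf (Φf x) = x := Phi_Psi hG hG' (fun y hy => hinv.1 hy)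
  have hright : ∀ x, Φf (Ψf x) = x := Phi_Psi hG' hG (fun y hy => hinv.2 hy)
  set E : S1 ≃ S1 := ⟨Φf, Ψf, hleft, hright⟩ with hE
  have hinj : Function.Injective Φf := E.injective
  have hbij : Function.Bijective Φf := E.bijective
  have hagree : ∀ γ : Γ, ∀ x ∈ μ, ρ'₁ γ x = ρ'₂ γ x := by
    intro γ x hx
    rw [h₁.eq_off γ x (not_mem_gapOrbit_of_mem σg I₀ hx),
        h₂.eq_off γ x (not_mem_gapOrbit_of_mem σg I₀ hx)]
  obtain ⟨a, b, c, ha, hb, hc, hac, hbac⟩ :=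
    exists_mu_triple hrep.perfect hrep.nonempty
  have hmatch : ∀ γ : Γ, (OrientPres (ρ'₁ γ) ∧ OrientPres (ρ'₂ γ)) ∨
      (OrientRev (ρ'₁ γ) ∧ OrientRev (ρ'₂ γ)) := fun γ =>
    orient_match (h₁.rep'.orient γ) (h₂.rep'.orient γ) (hagree γ)
      ⟨a, b, c, ha, hb, hc, hac, hbac⟩
  have hmonoAt : ∀ x₀ : S1, x₀ ∈ μ → ∀ y z : S1, y ≠ x₀ → z ≠ x₀ →
      pos1 (y - x₀) < pos1 (z - x₀) → pos1 (Φf y - x₀) < pos1 (Φf z - x₀) := by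
    intro x₀ hx₀ y z hy hz hlt
    exact Phi_mono hG hinj hφ₀cont hφ₀orient hmatch
      (not_mem_gapOrbit_of_mem σg I₀ hx₀) hy hz hlt
  have hcontOn : ∀ x₀ : S1, x₀ ∈ μ → ContinuousOn Φf {x₀}ᶜ := fun x₀ hx₀ =>
    Phi_contOn hbij (not_mem_gapOrbit_of_mem σg I₀ hx₀) (hmonoAt x₀ hx₀)
  have hcont : Continuous Φf := by
    rw [continuous_iff_continuousAt]
    intro x
    rcases ne_or_eq x a with h | h
    · exact (hcontOn a ha).continuousAt (compl_singleton_mem_nhds h)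
    · subst h
      exact (hcontOn c hc).continuousAt (compl_singleton_mem_nhds hac)
  refine ⟨Continuous.homeoOfEquivCompactToT2 (f := E) hcont, ?_, ?_, ?_⟩
  · intro x hx
    have hx' : x ∈ ((σg (1 : Γ) I₀ : Gap μ) : Set S1) := by
      rw [map_one]; simpa using hx
    have h := Phi_eq_on hG hx'
    rw [inv_one] at h
    show Φf x = φ₀ x
    calc Φf x = ρ'₂ 1 (φ₀ (ρ'₁ 1 x)) := h
      _ = φ₀ x := by rw [hom_one_apply ρ'₁, hom_one_apply ρ'₂]
  · intro x hx
    show Φf x = x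
    exact Phi_eq_off hx
  · intro γ x
    show Φf (ρ'₁ γ x) = ρ'₂ γ (Φf x)
    exact Phi_conj ρ hG h₁.eq_off h₂.eq_off γ x
end
end

section
/- Let Γ̄ be an orbifold group, let ρ̄: Γ̄ → Homeo(S¹) be a μ-faithful non-elementary (μ,τ,σ)-representation, and let ρ̄′: Γ̄ → Homeo(S¹) be a modification of ρ̄ on a periodic gap. Then ρ̄′ has the almost (k)-convergence property if and only if ρ̄ has the almost (k)-convergence property. -/
open Set Filter Topology
open scoped commutatorElement

noncomputable section

namespace PAFlow

section Statement4Aux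
open MeasureTheory ENNReal

/-! ### Auxiliary facts about the circle -/

lemma s4_pos1_mem (z : S1) : pos1 z ∈ Ico (0:ℝ) 1 := by
  have := (AddCircle.equivIco 1 0 z).2; simpa [pos1] using this

lemma s4_coe_pos1 (z : S1) : ((pos1 z : ℝ) : S1) = z :=
  (AddCircle.equivIco 1 0).symm_apply_apply z

lemma s4_pos1_coe {r : ℝ} (h : r ∈ Ico (0:ℝ) 1) : pos1 ((r : ℝ) : S1) = r := by
  unfold pos1
  rw [show AddCircle.equivIco (1:ℝ) 0 = QuotientAddGroup.equivIcoMod one_pos 0 from rfl]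
  rw [QuotientAddGroup.equivIcoMod_coe]
  simpa using (toIcoMod_eq_self one_pos).mpr (by simpa using h)

lemma s4_pos1_eq_zero {z : S1} : pos1 z = 0 ↔ z = 0 := by
  constructor
  · intro h
    have := s4_coe_pos1 z
    rw [h] at this
    simpa using this.symm
  · rintro rfl
    have : ((0:ℝ) : S1) = 0 := by simp
    rw [← this, s4_pos1_coe (by constructor <;> norm_num)]

lemma s4_coe_eq_coe {a b : ℝ} : ((a : S1) = b) ↔ ∃ n : ℤ, b - a = n := by
  rw [QuotientAddGroup.eq_iff_sub_mem]
  constructor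
  · rintro h
    rw [AddSubgroup.mem_zmultiples_iff] at h
    obtain ⟨n, hn⟩ := h
    exact ⟨-n, by simp at hn ⊢; linarith [hn]⟩
  · rintro ⟨n, hn⟩
    rw [AddSubgroup.mem_zmultiples_iff]
    exact ⟨-n, by simp; linarith⟩

lemma s4_coeS1_sub (a b : ℝ) : ((a - b : ℝ) : S1) = (a:S1) - (b:S1) :=
  map_sub (QuotientAddGroup.mk' _) a b

lemma s4_coeS1_one : ((1 : ℝ) : S1) = 0 := by
  rw [AddCircle.coe_eq_zero_iff]; exact ⟨1, by simp⟩

lemma s4_continuous_coeS1 : Continuous ((↑) : ℝ → S1) := continuous_quotient_mk'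

lemma s4_norm_coe_le (u : ℝ) : ‖((u:ℝ) : S1)‖ ≤ |u| := by
  rw [AddCircle.norm_eq]
  simpa using round_le u 0

lemma s4_norm_coe_eq_min {t : ℝ} (h : t ∈ Ico (0:ℝ) 1) :
    ‖((t:ℝ) : S1)‖ = min t (1 - t) := by
  rw [AddCircle.norm_eq]
  simp only [inv_one, one_mul, mul_one]
  rw [abs_sub_round_eq_min, Int.fract_eq_self.mpr ⟨h.1, h.2⟩]

lemma s4_volume_arc_ge {a b : ℝ} (h1 : b ≤ a + 1) :
    ENNReal.ofReal (b - a) ≤ volume (((↑) : ℝ → S1) '' (Ioo a b)) := by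
  have hmeas : MeasurableSet (((↑) : ℝ → S1) '' (Ioo a b)) :=
    (QuotientAddGroup.isOpenMap_coe _ isOpen_Ioo).measurableSet
  have hp := (AddCircle.measurePreserving_mk 1 a).measure_preimage hmeas.nullMeasurableSet
  rw [← hp]
  rw [Measure.restrict_apply (measurableSet_preimage (by measurability) hmeas)]
  calc ENNReal.ofReal (b - a) = volume (Ioo a b) := (Real.volume_Ioo).symm
    _ ≤ _ := by
        apply measure_mono
        intro r hr
        exact ⟨mem_image_of_mem _ hr, hr.1, le_trans hr.2.le h1⟩

/-- A preconnected subset of the circle containing two points has measure at least their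
distance. -/
lemma s4_volume_ge_dist {U : Set S1} (hU : IsPreconnected U) {x y : S1}
    (hx : x ∈ U) (hy : y ∈ U) : ENNReal.ofReal (dist x y) ≤ volume U := by
  rcases le_or_gt (dist x y) 0 with hd | hd
  · simpa [ENNReal.ofReal_eq_zero.mpr hd] using (zero_le _)
  set t : ℝ := pos1 (y - x) with ht_def
  set c : ℝ := pos1 x with hc_def
  have htmem := s4_pos1_mem (y - x)
  have hcmem := s4_pos1_mem x
  have hxc : ((c : ℝ) : S1) = x := s4_coe_pos1 x
  have hyx : ((t : ℝ) : S1) = y - x := s4_coe_pos1 (y - x)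
  have ht0 : 0 < t := by
    rcases lt_or_eq_of_le htmem.1 with h | h
    · exact h
    · exfalso
      have h1 : y - x = 0 := s4_pos1_eq_zero.mp h.symm
      have h2 : y = x := sub_eq_zero.mp h1
      rw [h2] at hd; simp at hd
  have ht1 : t < 1 := htmem.2
  have hy' : ((c + t : ℝ) : S1) = y := by
    rw [AddCircle.coe_add, hxc, hyx]; abel
  have hdist : dist x y ≤ t ∧ dist x y ≤ 1 - t := by
    have h1 : dist x y = ‖((t:ℝ) : S1)‖ := by
      rw [hyx, dist_eq_norm, norm_sub_rev]
    rw [h1, s4_norm_coe_eq_min ⟨htmem.1, ht1⟩]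
    exact ⟨min_le_left _ _, min_le_right _ _⟩
  by_cases h1 : ∀ r ∈ Ioo (0:ℝ) t, ((c + r : ℝ) : S1) ∈ U
  · have hsub : ((↑) : ℝ → S1) '' (Ioo c (c + t)) ⊆ U := by
      rintro z ⟨r, hr, rfl⟩
      have := h1 (r - c) ⟨by linarith [hr.1], by linarith [hr.2]⟩
      simpa [add_sub_cancel] using this
    calc ENNReal.ofReal (dist x y) ≤ ENNReal.ofReal ((c + t) - c) := by
          apply ENNReal.ofReal_le_ofReal; simpa using hdist.1
      _ ≤ volume (((↑) : ℝ → S1) '' (Ioo c (c + t))) := s4_volume_arc_ge (by linarith)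
      _ ≤ volume U := measure_mono hsub
  · push_neg at h1
    obtain ⟨p, hp, hpU⟩ := h1
    by_cases h2 : ∀ r ∈ Ioo t 1, ((c + r : ℝ) : S1) ∈ U
    · have hsub : ((↑) : ℝ → S1) '' (Ioo (c + t) (c + 1)) ⊆ U := by
        rintro z ⟨r, hr, rfl⟩
        have := h2 (r - c) ⟨by linarith [hr.1], by linarith [hr.2]⟩
        simpa [add_sub_cancel] using this
      calc ENNReal.ofReal (dist x y) ≤ ENNReal.ofReal ((c + 1) - (c + t)) := by
            apply ENNReal.ofReal_le_ofReal; simp only [add_sub_add_left_eq_sub]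
            linarith [hdist.2]
        _ ≤ volume (((↑) : ℝ → S1) '' (Ioo (c + t) (c + 1))) := s4_volume_arc_ge (by linarith)
        _ ≤ volume U := measure_mono hsub
    · push_neg at h2
      obtain ⟨q, hq, hqU⟩ := h2
      exfalso
      set V1 : Set S1 := ((↑) : ℝ → S1) '' (Ioo (c + p) (c + q)) with hV1
      set V2 : Set S1 := ((↑) : ℝ → S1) '' (Ioo (c + q - 1) (c + p)) with hV2
      have hV1open : IsOpen V1 := QuotientAddGroup.isOpenMap_coe _ isOpen_Ioo
      have hV2open : IsOpen V2 := QuotientAddGroup.isOpenMap_coe _ isOpen_Ioo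
      have hcover : U ⊆ V1 ∪ V2 := by
        intro z hz
        have hznep : z ≠ ((c + p : ℝ) : S1) := fun h => hpU (h ▸ hz)
        have hzneq : z ≠ ((c + q : ℝ) : S1) := fun h => hqU (h ▸ hz)
        set r : ℝ := pos1 (z - ((c + p : ℝ) : S1)) with hr_def
        have hrmem := s4_pos1_mem (z - ((c + p : ℝ) : S1))
        have hz_eq : ((c + p + r : ℝ) : S1) = z := by
          rw [AddCircle.coe_add, s4_coe_pos1]
          abel
        have hr0 : r ≠ 0 := by
          intro h
          apply hznep
          rw [← hz_eq, h]; norm_num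
        have hrqp : r ≠ q - p := by
          intro h
          apply hzneq
          rw [← hz_eq, h]; ring_nf
        rcases lt_or_gt_of_ne hrqp with h | h
        · left
          exact ⟨c + p + r, ⟨by have := lt_of_le_of_ne hrmem.1 (Ne.symm hr0); linarith,
            by linarith⟩, hz_eq⟩
        · right
          refine ⟨c + p + r - 1, ⟨by linarith, by linarith [hrmem.2]⟩, ?_⟩
          rw [← hz_eq]
          rw [s4_coe_eq_coe]
          exact ⟨1, by push_cast; ring⟩
      have hyV1 : y ∈ U ∩ V1 := ⟨hy, ⟨c + t, ⟨by linarith [hp.2], by linarith [hq.1]⟩, hy'⟩⟩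
      have hxV2 : x ∈ U ∩ V2 := ⟨hx, ⟨c, ⟨by linarith [hq.2], by linarith [hp.1]⟩, hxc⟩⟩
      obtain ⟨z, _, hz1, hz2⟩ :=
        hU V1 V2 hV1open hV2open hcover ⟨y, hyV1⟩ ⟨x, hxV2⟩
      obtain ⟨r1, hr1, hzr1⟩ := hz1
      obtain ⟨r2, hr2, hzr2⟩ := hz2
      have heq12 : (r2 : S1) = r1 := by rw [hzr1, hzr2]
      rw [s4_coe_eq_coe] at heq12
      obtain ⟨n, hn⟩ := heq12
      have h0n : (0:ℝ) < n := by rw [← hn]; linarith [hr1.1, hr2.2]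
      have h1n : (n:ℝ) < 1 := by rw [← hn]; linarith [hr1.2, hr2.1]
      have hn0 : (0:ℤ) < n := by exact_mod_cast h0n
      have hn1 : (1:ℤ) ≤ n := hn0
      have : (1:ℝ) ≤ n := by exact_mod_cast hn1
      linarith

lemma s4_isOpen_oArc (a c : S1) : IsOpen (oArc a c) := by
  unfold oArc
  split
  · exact isOpen_compl_singleton
  · have h : {b : S1 | 0 < pos1 (b - a) ∧ pos1 (b - a) < pos1 (c - a)} =
        (fun z : S1 => z + a) '' (((↑) : ℝ → S1) '' (Ioo 0 (pos1 (c - a)))) := by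
      ext b
      constructor
      · rintro ⟨h1, h2⟩
        exact ⟨b - a, ⟨pos1 (b - a), ⟨h1, h2⟩, s4_coe_pos1 _⟩, sub_add_cancel b a⟩
      · rintro ⟨z, ⟨r, hr, rfl⟩, rfl⟩
        have hr1 : r ∈ Ico (0:ℝ) 1 := ⟨hr.1.le, lt_trans hr.2 (s4_pos1_mem (c - a)).2⟩
        simp only [mem_setOf_eq, add_sub_cancel_right]
        rw [s4_pos1_coe hr1]
        exact hr
    rw [h]
    exact (Homeomorph.addRight a).isOpenMap _
      (QuotientAddGroup.isOpenMap_coe _ isOpen_Ioo)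

/-! ### Local connectedness of the circle -/

lemma s4_ball_eq_arc (x : S1) {r : ℝ} (hr : 0 < r) (hr2 : r ≤ 1/2) :
    Metric.ball x r = ((↑) : ℝ → S1) '' (Ioo (pos1 x - r) (pos1 x + r)) := by
  set c := pos1 x with hc
  ext z
  constructor
  · intro hz
    have hz' : dist z x < r := hz
    set t := pos1 (z - x) with ht
    have htm := s4_pos1_mem (z - x)
    have hdist : dist z x = min t (1 - t) := by
      rw [dist_eq_norm, ← s4_coe_pos1 (z - x), s4_norm_coe_eq_min htm]
    rcases lt_or_ge t r with h | h
    · refine ⟨c + t, ⟨by linarith [htm.1], by linarith⟩, ?_⟩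
      rw [AddCircle.coe_add, s4_coe_pos1, s4_coe_pos1]; abel
    · have h1t : 1 - t < r := by
        rcases min_cases t (1 - t) with ⟨hmin, _⟩ | ⟨hmin, _⟩ <;> rw [hmin] at hdist <;> linarith
      refine ⟨c + t - 1, ⟨by linarith, by linarith [htm.2]⟩, ?_⟩
      rw [s4_coeS1_sub, s4_coeS1_one, sub_zero, AddCircle.coe_add, s4_coe_pos1, s4_coe_pos1]
      abel
  · rintro ⟨s, hs, rfl⟩
    show dist _ x < r
    rw [dist_eq_norm, ← s4_coe_pos1 x, ← hc, ← s4_coeS1_sub]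
    calc ‖((s - c : ℝ) : S1)‖ ≤ |s - c| := s4_norm_coe_le _
      _ < r := by rw [abs_lt]; constructor <;> [linarith [hs.1]; linarith [hs.2]]

lemma s4_isPreconnected_ball (x : S1) {r : ℝ} (hr2 : r ≤ 1/2) :
    IsPreconnected (Metric.ball x r) := by
  rcases le_or_gt r 0 with h | h
  · rw [Metric.ball_eq_empty.mpr h]; exact isPreconnected_empty
  · rw [s4_ball_eq_arc x h hr2]
    exact (isPreconnected_Ioo).image _ s4_continuous_coeS1.continuousOn

instance : LocallyConnectedSpace S1 := by
  apply locallyConnectedSpace_of_connected_bases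
    (fun (x : S1) (r : ℝ) => Metric.ball x r) (fun _ r => 0 < r ∧ r ≤ 1/2)
  · intro x
    apply (Metric.nhds_basis_ball).to_hasBasis
    · intro r hr
      exact ⟨min r (1/2), ⟨by positivity, min_le_right _ _⟩,
        Metric.ball_subset_ball (min_le_left _ _)⟩
    · intro r hr
      exact ⟨r, hr.1, subset_rfl⟩
  · intro x r hr
    exact s4_isPreconnected_ball x hr.2

/-! ### Gaps -/

variable {μ : Set S1}

lemma s4_gap_isOpen (hclosed : IsClosed μ) (G : Gap μ) : IsOpen (G : Set S1) := by
  obtain ⟨x, hx, h⟩ := G.2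
  rw [h]; exact hclosed.isOpen_compl.connectedComponentIn

lemma s4_gap_preconn (G : Gap μ) : IsPreconnected (G : Set S1) := by
  obtain ⟨x, hx, h⟩ := G.2
  rw [h]; exact isPreconnected_connectedComponentIn

lemma s4_gap_subset (G : Gap μ) : (G : Set S1) ⊆ μᶜ := by
  obtain ⟨x, hx, h⟩ := G.2
  exact h ▸ connectedComponentIn_subset _ _

lemma s4_gap_disjoint {G H : Gap μ} (hne : G ≠ H) : Disjoint (G : Set S1) (H : Set S1) := by
  rw [Set.disjoint_left]
  intro z hzG hzH
  apply hne
  obtain ⟨x, hx, hG⟩ := G.2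
  obtain ⟨y, hy, hH⟩ := H.2
  apply Subtype.ext
  show (G : Set S1) = H
  rw [hG, hH, connectedComponentIn_eq (hG ▸ hzG : z ∈ connectedComponentIn μᶜ x),
    connectedComponentIn_eq (hH ▸ hzH : z ∈ connectedComponentIn μᶜ y)]

/-- Only finitely many gaps have diameter at least `c`. -/
lemma s4_bigGaps_finite (hclosed : IsClosed μ) {c : ℝ} (hc : 0 < c) :
    {G : Gap μ | c ≤ Metric.diam (G : Set S1)}.Finite := by
  by_contra h
  rw [← Set.not_infinite, not_not] at h
  have hvol : ∀ G ∈ {G : Gap μ | c ≤ Metric.diam (G : Set S1)},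
      ENNReal.ofReal (c/2) ≤ volume (G : Set S1) := by
    intro G hG
    have hex : ∃ x ∈ (G : Set S1), ∃ y ∈ (G : Set S1), c/2 < dist x y := by
      by_contra hcon
      push_neg at hcon
      have h1 := Metric.diam_le_of_forall_dist_le (by linarith : (0:ℝ) ≤ c/2) hcon
      have hGc : c ≤ Metric.diam (G : Set S1) := hG
      linarith
    obtain ⟨x, hx, y, hy, hxy⟩ := hex
    calc ENNReal.ofReal (c/2) ≤ ENNReal.ofReal (dist x y) :=
          ENNReal.ofReal_le_ofReal hxy.le
      _ ≤ volume (G : Set S1) := s4_volume_ge_dist (s4_gap_preconn G) hx hy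
  set f := h.natEmbedding with hf
  have hdisj : Pairwise fun n m : ℕ =>
      Disjoint (((f n : Gap μ)) : Set S1) (((f m : Gap μ)) : Set S1) := by
    intro n m hnm
    exact s4_gap_disjoint (fun h' => hnm (f.injective (Subtype.ext h')))
  have hmeas : ∀ n : ℕ, MeasurableSet (((f n : Gap μ)) : Set S1) :=
    fun n => (s4_gap_isOpen hclosed _).measurableSet
  have hU := measure_iUnion (μ := (volume : Measure S1)) hdisj hmeas
  have hsum : (⊤ : ℝ≥0∞) ≤ ∑' n : ℕ, volume (((f n : Gap μ)) : Set S1) := by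
    calc (⊤:ℝ≥0∞) = ∑' _ : ℕ, ENNReal.ofReal (c/2) :=
        (ENNReal.tsum_const_eq_top_of_ne_zero
          ((ENNReal.ofReal_pos.mpr (by linarith)).ne')).symm
      _ ≤ _ := ENNReal.tsum_le_tsum fun n => hvol _ (f n).2
  have htop : (⊤:ℝ≥0∞) ≤ volume (⋃ n : ℕ, (((f n : Gap μ)) : Set S1)) := hU ▸ hsum
  exact (measure_lt_top (volume : Measure S1) _).not_ge htop

/-! ### Transfer lemmas -/

lemma s4_rho_inj {Γ : Type} [Group Γ] {ρ : Γ →* (S1 ≃ₜ S1)}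
    (hfaith : MuFaithful ρ μ) {γ γ' : Γ} (h : ρ γ = ρ γ') : γ = γ' := by
  have h1 : ρ (γ * γ'⁻¹) = 1 := by
    rw [map_mul, map_inv, h, mul_inv_cancel]
  have h2 : ∀ x ∈ μ, ρ (γ * γ'⁻¹) x = x := by
    intro x _
    rw [h1]; rfl
  exact mul_inv_eq_one.mp (hfaith _ h2)

end Statement4Aux

end PAFlow

namespace PAFlow

section Statement4Key
open MeasureTheory ENNReal

/-- Main transfer lemma: if two representations induce the same action on gaps, agree off
the orbit of the gap `I₀` whose stabilizer is cyclic generated by `ci`, and the first is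
`μ`-faithful with the almost (k)-convergence property, then the second also has the almost
(k)-convergence property. -/
lemma s4_key {Γ : Type} [Group Γ] {ρ ρ' : Γ →* (S1 ≃ₜ S1)} {μ : Set S1} {k : ℕ}
    {τ : S1 → S1} {σg : Γ →* Equiv.Perm (Gap μ)}
    (hclosed : IsClosed μ)
    (hgapAct : ∀ (γ : Γ) (I : Gap μ), ((σg γ I : Gap μ) : Set S1) = (ρ γ) '' (I : Set S1))
    (hgapAct' : ∀ (γ : Γ) (I : Gap μ), ((σg γ I : Gap μ) : Set S1) = (ρ' γ) '' (I : Set S1))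
    (hfaith : MuFaithful ρ μ)
    {I₀ : Gap μ} {ci : Γ} (hstab : gapStab σg I₀ = Subgroup.zpowers ci)
    (heq : ∀ (γ : Γ) (x : S1), x ∉ gapOrbit σg I₀ → ρ' γ x = ρ γ x)
    (h : HasAlmostKConv ρ μ k τ σg) : HasAlmostKConv ρ' μ k τ σg := by
  intro γs
  obtain ⟨φ, hφ, hcase⟩ := h γs
  rcases hcase with h1 | h2 | h3
  · exact ⟨φ, hφ, Or.inl (fun m n => congrArg ρ' (s4_rho_inj hfaith (h1 m n)))⟩
  · obtain ⟨a, γ, hgap, p, hp⟩ := h2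
    exact ⟨φ, hφ, Or.inr (Or.inl
      ⟨a, γ, hgap, p, fun n => congrArg ρ' (s4_rho_inj hfaith (hp n))⟩)⟩
  · by_cases hA : ∃ (β : Γ) (G : Gap μ),
        {n : ℕ | σg (γs (φ n)) (σg β I₀) = G}.Infinite
    · -- Case A: some gap of the orbit has a constant image along a subsequence.
      obtain ⟨β, G, hinf⟩ := hA
      obtain ⟨ψ, hψ, hψmem⟩ := Filter.extraction_of_frequently_atTop
        (Nat.frequently_atTop_iff_infinite.mpr hinf)
      set g0 := γs (φ (ψ 0)) with hg0
      have hci : σg ci I₀ = I₀ := by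
        have hmem : ci ∈ gapStab σg I₀ := hstab ▸ Subgroup.mem_zpowers ci
        exact hmem
      have hpn : ∀ n : ℕ, ∃ m : ℤ,
          γs (φ (ψ n)) = ((g0 * β) * ci * (g0 * β)⁻¹) ^ m * g0 := by
        intro n
        have hmem : (g0 * β)⁻¹ * (γs (φ (ψ n)) * β) ∈ gapStab σg I₀ := by
          show σg ((g0 * β)⁻¹ * (γs (φ (ψ n)) * β)) I₀ = I₀
          have e1 : σg (γs (φ (ψ n)) * β) I₀ = σg (g0 * β) I₀ := by
            rw [map_mul, Equiv.Perm.mul_apply, map_mul, Equiv.Perm.mul_apply]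
            have hn' : σg (γs (φ (ψ n))) (σg β I₀) = G := hψmem n
            have h0' : σg (γs (φ (ψ 0))) (σg β I₀) = G := hψmem 0
            rw [hn', ← hg0] at *
            rw [← h0']
          rw [map_mul, Equiv.Perm.mul_apply, e1, map_inv, Equiv.Perm.inv_def, Equiv.symm_apply_apply]
        rw [hstab] at hmem
        obtain ⟨m, hm⟩ := Subgroup.mem_zpowers_iff.mp hmem
        refine ⟨m, ?_⟩
        rw [conj_zpow, hm]
        group
      choose p hp using hpn
      refine ⟨φ ∘ ψ, hφ.comp hψ, Or.inr (Or.inl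
        ⟨g0, (g0 * β) * ci * (g0 * β)⁻¹, ⟨σg (g0 * β) I₀, ?_⟩, p,
          fun n => congrArg ρ' (hp n)⟩)⟩
      · rw [map_mul, map_mul, map_inv, Equiv.Perm.mul_apply, Equiv.Perm.mul_apply,
          Equiv.Perm.inv_def, Equiv.symm_apply_apply, hci]
    · -- Case B: image gaps of every orbit gap eventually become small.
      push_neg at hA
      obtain ⟨xm, hxm, xp, hxp, hconv⟩ := h3
      refine ⟨φ, hφ, Or.inr (Or.inr ⟨xm, hxm, xp, hxp, ?_⟩)⟩
      intro i hik K hKsub hKcomp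
      set A := oArc (τ^[i] xm) (τ^[i + 1] xm) with hAdef
      have hAopen : IsOpen A := s4_isOpen_oArc _ _
      obtain ⟨δ0, hδ0, hthick⟩ := hKcomp.exists_thickening_subset_open hAopen hKsub
      set K' := Metric.cthickening (δ0/2) K with hK'def
      have hK'A : K' ⊆ A :=
        (Metric.cthickening_subset_thickening' hδ0 (by linarith) K).trans hthick
      have hK'comp : IsCompact K' := (Metric.isClosed_cthickening).isCompact
      have hKK' : K ⊆ K' := Metric.self_subset_cthickening K
      have hconvK' := hconv i hik K' hK'A hK'comp
      have hconvK := hconv i hik K hKsub hKcomp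
      rw [Metric.tendstoUniformlyOn_iff] at hconvK hconvK' ⊢
      intro ε hε
      set Big : Set (Gap μ) := {G : Gap μ | δ0/2 ≤ Metric.diam (G : Set S1) ∧
        ((G : Set S1) ∩ K).Nonempty ∧ ∃ β : Γ, σg β I₀ = G} with hBigdef
      have hBigFin : Big.Finite :=
        (s4_bigGaps_finite hclosed (by linarith : (0:ℝ) < δ0/2)).subset (fun G hG => hG.1)
      have hsmall : ∀ G ∈ Big, ∀ᶠ n in atTop,
          Metric.diam ((σg (γs (φ n)) G : Gap μ) : Set S1) < ε/2 := by
        intro G hG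
        obtain ⟨β, hβ⟩ := hG.2.2
        have hfin : {n : ℕ | ε/2 ≤ Metric.diam ((σg (γs (φ n)) G : Gap μ) : Set S1)}.Finite := by
          have hBG := s4_bigGaps_finite hclosed (half_pos hε) (μ := μ)
          refine (hBG.biUnion (fun H _ => hA β H)).subset ?_
          intro n hn
          refine mem_biUnion (hn : ε/2 ≤ _) ?_
          show σg (γs (φ n)) (σg β I₀) = σg (γs (φ n)) G
          rw [hβ]
        have hev := hfin.eventually_cofinite_notMem
        rw [Nat.cofinite_eq_atTop] at hev
        exact hev.mono (fun n hn => lt_of_not_ge hn)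
      have hsmallAll : ∀ᶠ n in atTop, ∀ G ∈ Big,
          Metric.diam ((σg (γs (φ n)) G : Gap μ) : Set S1) < ε/2 :=
        (Filter.eventually_all_finite hBigFin).mpr hsmall
      have hbounded : ∀ s : Set S1, Bornology.IsBounded s :=
        fun s => (isCompact_univ.isBounded).subset (subset_univ _)
      filter_upwards [hconvK' ε hε, hconvK (ε/2) (half_pos hε), hsmallAll] with n hn1 hn2 hn3
      intro x hx
      by_cases hxJ : x ∈ gapOrbit σg I₀
      · obtain ⟨β, hβx⟩ : ∃ β : Γ, x ∈ ((σg β I₀ : Gap μ) : Set S1) := by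
          simpa [gapOrbit, mem_iUnion] using hxJ
        set I : Gap μ := σg β I₀ with hIdef
        have himg' : ρ' (γs (φ n)) x ∈ ((σg (γs (φ n)) I : Gap μ) : Set S1) := by
          rw [hgapAct']
          exact mem_image_of_mem _ hβx
        by_cases hdiam : Metric.diam (I : Set S1) < δ0/2
        · have hIK' : (I : Set S1) ⊆ K' := by
            intro z hz
            apply Metric.mem_cthickening_of_dist_le z x (δ0/2) K hx
            exact (Metric.dist_le_diam_of_mem (hbounded _) hz hβx).trans hdiam.le
          rw [hgapAct] at himg'
          obtain ⟨z, hz, hze⟩ := himg'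
          rw [← hze]
          exact hn1 z (hIK' hz)
        · have hIBig : I ∈ Big := ⟨le_of_not_gt hdiam, ⟨x, hβx, hx⟩, β, rfl⟩
          obtain ⟨xI, hxI_I, hxI_K⟩ := hIBig.2.1
          have himgρ : ρ (γs (φ n)) xI ∈ ((σg (γs (φ n)) I : Gap μ) : Set S1) := by
            rw [hgapAct]; exact mem_image_of_mem _ hxI_I
          calc dist (τ^[i] xp) (ρ' (γs (φ n)) x)
              ≤ dist (τ^[i] xp) (ρ (γs (φ n)) xI)
                + dist (ρ (γs (φ n)) xI) (ρ' (γs (φ n)) x) := dist_triangle _ _ _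
            _ < ε/2 + ε/2 := by
                apply add_lt_add (hn2 xI hxI_K)
                exact lt_of_le_of_lt
                  (Metric.dist_le_diam_of_mem (hbounded _) himgρ himg') (hn3 I hIBig)
            _ = ε := add_halves ε
      · rw [heq _ _ hxJ]
        exact hn1 x (hKK' hx)

end Statement4Key

end PAFlow

open PAFlow in
/-- a modification of a `μ`-faithful non-elementary `(μ,τ,σ)`-representation
of an orbifold group on a periodic gap has the almost (k)-convergence property if and only
if the original representation does. -/
theorem statement4 {Γ : Type} [Group Γ] (P : OrbifoldPresentation Γ)
    (ρ : Γ →* (S1 ≃ₜ S1)) (μ : Set S1) (k : ℕ)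
    (T : TauData μ k) (σg : Γ →* Equiv.Perm (Gap μ))
    (hrep : IsMTSRep ρ μ k T σg)
    (hfaith : MuFaithful ρ μ) (hnonel : NonElementary ρ)
    (I₀ : Gap μ) (hper : gapStab σg I₀ ≠ ⊥)
    (i : Fin P.q) (hstab : gapStab σg I₀ = Subgroup.zpowers (P.c i))
    (f₀ : S1 → S1) (hf₀ : IsClosureHomeo f₀ (I₀ : Set S1))
    (hbd : ∀ x ∈ frontier (I₀ : Set S1), f₀ x = ρ (P.c i) x)
    (ρ' : Γ →* (S1 ≃ₜ S1))
    (hmod : IsModification ρ ρ' μ k T σg I₀ (P.c i) f₀) :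
    HasAlmostKConv ρ' μ k T.τ σg ↔ HasAlmostKConv ρ μ k T.τ σg := by
  have hclosed : IsClosed μ := hrep.perfect.closed
  have horb : ∀ x ∈ μ, x ∉ gapOrbit σg I₀ := by
    intro x hx hmem
    obtain ⟨β, hβ⟩ := mem_iUnion.mp hmem
    exact (s4_gap_subset _) hβ hx
  have hfaith' : MuFaithful ρ' μ := by
    intro γ hγ
    apply hfaith γ
    intro x hx
    rw [← hmod.eq_off γ x (horb x hx)]
    exact hγ x hx
  constructor
  · intro h
    exact s4_key hclosed hmod.rep'.gapAct hrep.gapAct hfaith' hstab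
      (fun γ x hx => (hmod.eq_off γ x hx).symm) h
  · intro h
    exact s4_key hclosed hrep.gapAct hmod.rep'.gapAct hfaith hstab
      (fun γ x hx => hmod.eq_off γ x hx) h
end
end
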